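/- arXiv:2406.05825 — 3 statements merged into one kernel-verified Lean document; each statement's English description precedes it below -/
import Mathlib

section
/- Let T = T_h^k be a perfect k-ary tree with k ≥ 3 and h ≥ 1, and let f be an independent broadcast on T of maximum weight (an α_b-broadcast). Then f(v) ≤ 1 for every vertex v of T, and f(l) = 1 for every leaf l of T. -/
variable {V : Type*}

/-- The eccentricity of a vertex: the maximum distance to any vertex. -/
noncomputable def ecc (G : SimpleGraph V) [Fintype V] (v : V) : ℕ :=
  Finset.univ.sup (fun u => G.dist u v)

/-- A broadcast on `G`: a function assigning each vertex a power at most its eccentricity. -/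
def IsBroadcast (G : SimpleGraph V) [Fintype V] (f : V → ℕ) : Prop :=
  ∀ v, f v ≤ ecc G v

/-- `u` hears the broadcasting vertex `v`. -/
def Hears (G : SimpleGraph V) (f : V → ℕ) (u v : V) : Prop :=
  0 < f v ∧ G.dist u v ≤ f v

/-- An independent broadcast: no broadcasting vertex hears another vertex. -/
def IsIndepBroadcast (G : SimpleGraph V) [Fintype V] (f : V → ℕ) : Prop :=
  IsBroadcast G f ∧ ∀ v w, 0 < f v → v ≠ w → ¬ Hears G f v w

/-- The broadcast independence number: the maximum weight of an independent broadcast. -/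
noncomputable def alphaB (G : SimpleGraph V) [Fintype V] : ℕ :=
  sSup {w | ∃ f, IsIndepBroadcast G f ∧ w = ∑ v, f v}

/-- Vertices of the perfect `k`-ary tree of height `h`: strings of length at most `h`
over a `k`-letter alphabet. -/
abbrev KVert (k h : ℕ) : Type := {l : List (Fin k) // l.length ≤ h}

noncomputable instance (k h : ℕ) : Fintype (KVert k h) :=
  (List.finite_length_le (Fin k) h).fintype

/-- The perfect `k`-ary tree of height `h`: each string of length less than `h` is
adjacent to its `k` one-letter extensions. -/
def karyTree (k h : ℕ) : SimpleGraph (KVert k h) where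
  Adj x y := (∃ a : Fin k, x.1 = a :: y.1) ∨ (∃ a : Fin k, y.1 = a :: x.1)
  symm := ⟨fun x y hxy => hxy.symm⟩
  loopless := ⟨by
    rintro x (⟨a, ha⟩ | ⟨a, ha⟩) <;>
    · have := congrArg List.length ha
      rw [List.length_cons] at this
      omega⟩

/-- A leaf of the perfect `k`-ary tree of height `h`: a string of length `h`. -/
def IsKLeaf (k h : ℕ) (v : KVert k h) : Prop := v.1.length = h

namespace S6
variable {α : Type*} [DecidableEq α]

def meet : List α → List α → List α
  | [], _ => []
  | a :: x, y => if (a :: x) <:+ y then a :: x else meet x y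

lemma meet_suffix_left : ∀ x y : List α, meet x y <:+ x
  | [], _ => List.nil_suffix
  | a :: x, y => by
    rw [meet]; split
    · exact List.suffix_refl _
    · exact (meet_suffix_left x y).trans (List.suffix_cons a x)

lemma meet_suffix_right : ∀ x y : List α, meet x y <:+ y
  | [], _ => List.nil_suffix
  | a :: x, y => by
    rw [meet]; split
    · assumption
    · exact meet_suffix_right x y

lemma suffix_meet : ∀ x y z : List α, z <:+ x → z <:+ y → z <:+ meet x y
  | [], _, z, hx, _ => by simpa [meet] using hx
  | a :: x, y, z, hx, hy => by
    rw [meet]; split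
    · exact hx
    · rcases List.suffix_cons_iff.1 hx with rfl | hx'
      · exact absurd hy ‹¬ (a :: x) <:+ y›
      · exact suffix_meet x y z hx' hy

def cs (x y : List α) : ℕ := (meet x y).length

lemma cs_le_left (x y : List α) : cs x y ≤ x.length := (meet_suffix_left x y).length_le
lemma cs_le_right (x y : List α) : cs x y ≤ y.length := (meet_suffix_right x y).length_le

lemma le_cs {x y z : List α} (hx : z <:+ x) (hy : z <:+ y) : z.length ≤ cs x y :=
  (suffix_meet x y z hx hy).length_le

lemma cs_self (x : List α) : cs x x = x.length :=
  le_antisymm (cs_le_left x x) (le_cs (List.suffix_refl x) (List.suffix_refl x))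

lemma meet_eq_right {x y : List α} (h : y <:+ x) : meet x y = y :=
  (meet_suffix_right x y).eq_of_length
    (le_antisymm (cs_le_right x y) (le_cs h (List.suffix_refl y)))

lemma cs_eq_right {x y : List α} (h : y <:+ x) : cs x y = y.length := by
  rw [cs, meet_eq_right h]

omit [DecidableEq α] in
lemma suffix_or_suffix {z₁ z₂ u : List α} (h1 : z₁ <:+ u) (h2 : z₂ <:+ u) :
    z₁ <:+ z₂ ∨ z₂ <:+ z₁ := by
  rw [← List.reverse_prefix] at h1 h2 ⊢
  rw [← List.reverse_prefix (l₁ := z₂)]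
  exact List.prefix_or_prefix_of_prefix h1 h2

omit [DecidableEq α] in
lemma suffix_eq_of_length {z₁ z₂ u : List α} (h1 : z₁ <:+ u) (h2 : z₂ <:+ u)
    (hl : z₁.length = z₂.length) : z₁ = z₂ := by
  rcases suffix_or_suffix h1 h2 with h | h
  · exact h.eq_of_length hl
  · exact (h.eq_of_length hl.symm).symm

lemma cs_min (v u w : List α) : min (cs v u) (cs u w) ≤ cs v w := by
  rcases suffix_or_suffix (meet_suffix_right v u) (meet_suffix_left u w) with h | h
  · calc min (cs v u) (cs u w) ≤ cs v u := min_le_left _ _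
    _ ≤ cs v w := le_cs (meet_suffix_left v u) (h.trans (meet_suffix_right u w))
  · calc min (cs v u) (cs u w) ≤ cs u w := min_le_right _ _
    _ ≤ cs v w := le_cs (h.trans (meet_suffix_left v u)) (meet_suffix_right u w)

lemma cs_le_cs_cons (a : α) (x y : List α) : cs x y ≤ cs (a :: x) y :=
  le_cs ((meet_suffix_left x y).trans (List.suffix_cons a x)) (meet_suffix_right x y)

lemma cs_cons_le (a : α) (x y : List α) : cs (a :: x) y ≤ cs x y + 1 := by
  rcases List.suffix_cons_iff.1 (meet_suffix_left (a :: x) y) with h | h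
  · have hxy : x <:+ y := (List.suffix_cons a x).trans (h ▸ meet_suffix_right (a :: x) y)
    calc cs (a :: x) y ≤ (a :: x).length := cs_le_left _ _
    _ = x.length + 1 := by simp
    _ = cs x y + 1 := by rw [le_antisymm (cs_le_left x y) (le_cs (List.suffix_refl x) hxy)]
  · have h2 := le_cs h (meet_suffix_right (a :: x) y)
    have h3 : cs (a :: x) y = (meet (a :: x) y).length := rfl
    omega

/-! ## graph lemmas -/

variable {k h : ℕ}

def root (k h : ℕ) : KVert k h := ⟨[], by simp⟩

lemma reach_root : ∀ (l : List (Fin k)) (hl : l.length ≤ h),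
    (karyTree k h).Reachable ⟨l, hl⟩ (root k h) := by
  intro l
  induction l with
  | nil => intro hl; exact SimpleGraph.Reachable.refl _
  | cons a l ih =>
    intro hl
    have hl' : l.length ≤ h := by simp at hl; omega
    have adj : (karyTree k h).Adj ⟨a :: l, hl⟩ ⟨l, hl'⟩ := Or.inl ⟨a, rfl⟩
    exact adj.reachable.trans (ih hl')

lemma tree_connected : (karyTree k h).Connected := by
  rw [SimpleGraph.connected_iff]
  refine ⟨fun x y => ?_, ⟨root k h⟩⟩
  exact (reach_root x.1 x.2).trans (reach_root y.1 y.2).symm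

lemma dist_up : ∀ (z σ : List (Fin k)) (hle : (z ++ σ).length ≤ h) (hσ : σ.length ≤ h),
    (karyTree k h).dist ⟨z ++ σ, hle⟩ ⟨σ, hσ⟩ ≤ z.length := by
  intro z
  induction z with
  | nil =>
    intro σ hle hσ
    have : (⟨[] ++ σ, hle⟩ : KVert k h) = ⟨σ, hσ⟩ := Subtype.ext (by simp)
    rw [this]; simp
  | cons a z ih =>
    intro σ hle hσ
    have hle' : (z ++ σ).length ≤ h := by simp at hle ⊢; omega
    have adj : (karyTree k h).Adj ⟨a :: z ++ σ, hle⟩ ⟨z ++ σ, hle'⟩ := Or.inl ⟨a, rfl⟩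
    calc (karyTree k h).dist ⟨a :: z ++ σ, hle⟩ ⟨σ, hσ⟩
        ≤ (karyTree k h).dist ⟨a :: z ++ σ, hle⟩ ⟨z ++ σ, hle'⟩
          + (karyTree k h).dist ⟨z ++ σ, hle'⟩ ⟨σ, hσ⟩ := tree_connected.dist_triangle
      _ ≤ 1 + z.length := by
          have h1 : (karyTree k h).dist ⟨a :: z ++ σ, hle⟩ ⟨z ++ σ, hle'⟩ ≤ 1 :=
            SimpleGraph.dist_le (SimpleGraph.Walk.cons adj SimpleGraph.Walk.nil)
          have h2 := ih σ hle' hσ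
          omega
      _ = z.length + 1 := by omega
      _ = (a :: z).length := by simp

lemma dist_le_sub (x y : KVert k h) :
    (karyTree k h).dist x y + 2 * cs x.1 y.1 ≤ x.1.length + y.1.length := by
  set m : KVert k h := ⟨meet x.1 y.1, (cs_le_left x.1 y.1).trans x.2⟩ with hm
  obtain ⟨zx, hzx⟩ := meet_suffix_left x.1 y.1
  obtain ⟨zy, hzy⟩ := meet_suffix_right x.1 y.1
  have hx : (karyTree k h).dist x m ≤ zx.length := by
    have hxe : x = ⟨zx ++ meet x.1 y.1, by rw [hzx]; exact x.2⟩ := Subtype.ext hzx.symm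
    rw [hxe]; exact dist_up zx (meet x.1 y.1) _ _
  have hy : (karyTree k h).dist y m ≤ zy.length := by
    have hye : y = ⟨zy ++ meet x.1 y.1, by rw [hzy]; exact y.2⟩ := Subtype.ext hzy.symm
    rw [hye]; exact dist_up zy (meet x.1 y.1) _ _
  have htri : (karyTree k h).dist x y ≤
      (karyTree k h).dist x m + (karyTree k h).dist m y := tree_connected.dist_triangle
  have hcomm : (karyTree k h).dist m y = (karyTree k h).dist y m := SimpleGraph.dist_comm ..
  have lx : zx.length + cs x.1 y.1 = x.1.length := by
    have := congrArg List.length hzx; simpa [cs] using this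
  have ly : zy.length + cs x.1 y.1 = y.1.length := by
    have := congrArg List.length hzy; simpa [cs] using this
  omega

lemma walk_bound {x y : KVert k h} (p : (karyTree k h).Walk x y) :
    x.1.length + y.1.length ≤ p.length + 2 * cs x.1 y.1 := by
  induction p with
  | nil => simp [cs_self]; omega
  | @cons u v w huv p ih =>
    rw [SimpleGraph.Walk.length_cons]
    rcases huv with ⟨a, ha⟩ | ⟨a, ha⟩
    · have h1 : cs v.1 w.1 ≤ cs u.1 w.1 := by rw [ha]; exact cs_le_cs_cons a v.1 w.1
      have h2 : u.1.length = v.1.length + 1 := by rw [ha]; simp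
      omega
    · have h1 : cs v.1 w.1 ≤ cs u.1 w.1 + 1 := by rw [ha]; exact cs_cons_le a u.1 w.1
      have h2 : v.1.length = u.1.length + 1 := by rw [ha]; simp
      omega

theorem dist_plus (x y : KVert k h) :
    (karyTree k h).dist x y + 2 * cs x.1 y.1 = x.1.length + y.1.length := by
  obtain ⟨p, hp⟩ :=
    ((reach_root x.1 x.2).trans (reach_root y.1 y.2).symm).exists_walk_length_eq_dist
  have hp' : p.length = (karyTree k h).dist x y := hp
  have lb : x.1.length + y.1.length ≤ p.length + 2 * cs x.1 y.1 := walk_bound p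
  have ub := dist_le_sub x y
  omega

lemma dist_of_suffix {x y : KVert k h} (hs : y.1 <:+ x.1) :
    (karyTree k h).dist x y + y.1.length = x.1.length := by
  have := dist_plus x y
  rw [cs_eq_right hs] at this
  have := y.1.length
  omega

lemma ecc_le (v : KVert k h) : ecc (karyTree k h) v ≤ h + v.1.length := by
  apply Finset.sup_le
  intro u _
  have h1 := dist_plus u v
  have h2 := u.2
  omega

lemma ecc_pos (hh : 1 ≤ h) (hk : 1 ≤ k) (v : KVert k h) : 1 ≤ ecc (karyTree k h) v := by
  by_cases hv : v.1.length = h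
  · have hne : v.1 ≠ [] := by intro e; rw [e] at hv; simp at hv; omega
    set u : KVert k h := ⟨v.1.tail, (List.tail_suffix v.1).length_le.trans v.2⟩ with hu
    have hd : (karyTree k h).dist v u + u.1.length = v.1.length :=
      dist_of_suffix (List.tail_suffix v.1)
    have hl : u.1.length + 1 = v.1.length := by
      simp only [hu, List.length_tail]
      omega
    have : (karyTree k h).dist u v = 1 := by
      rw [SimpleGraph.dist_comm]; omega
    calc (1 : ℕ) = (karyTree k h).dist u v := this.symm
      _ ≤ ecc (karyTree k h) v :=
          Finset.le_sup (f := fun u => (karyTree k h).dist u v) (Finset.mem_univ u)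
  · have hlt : v.1.length < h := lt_of_le_of_ne v.2 hv
    set u : KVert k h := ⟨(⟨0, hk⟩ : Fin k) :: v.1, by simp; omega⟩ with hu
    have hd : (karyTree k h).dist u v + v.1.length = u.1.length :=
      dist_of_suffix (List.suffix_cons _ v.1)
    have : (karyTree k h).dist u v = 1 := by
      have : u.1.length = v.1.length + 1 := by simp [hu]
      omega
    calc (1 : ℕ) = (karyTree k h).dist u v := this.symm
      _ ≤ ecc (karyTree k h) v :=
          Finset.le_sup (f := fun u => (karyTree k h).dist u v) (Finset.mem_univ u)

lemma cs_comm (x y : List (Fin k)) : cs x y = cs y x :=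
  le_antisymm (le_cs (meet_suffix_right x y) (meet_suffix_left x y))
    (le_cs (meet_suffix_right y x) (meet_suffix_left y x))

lemma card_suffix_level (σ : List (Fin k)) (m : ℕ) (hσm : σ.length ≤ m) (hmh : m ≤ h) :
    (Finset.univ.filter (fun u : KVert k h => σ <:+ u.1 ∧ u.1.length = m)).card
      = k ^ (m - σ.length) := by
  classical
  rw [← Fintype.card_subtype]
  have e : {u : KVert k h // σ <:+ u.1 ∧ u.1.length = m}
      ≃ List.Vector (Fin k) (m - σ.length) :=
    { toFun := fun u => ⟨u.1.1.take (m - σ.length), by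
        rcases u.2 with ⟨hs, hl⟩
        rw [List.length_take, hl]; omega⟩
      invFun := fun z => ⟨⟨z.1 ++ σ, by rw [List.length_append, z.2]; omega⟩,
        ⟨List.suffix_append z.1 σ, by rw [List.length_append, z.2]; omega⟩⟩
      left_inv := fun u => by
        rcases u with ⟨⟨l, hlh⟩, hs, hl⟩
        obtain ⟨zz, hzz⟩ := hs
        have hl' : l.length = m := hl
        have hzz' : zz ++ σ = l := hzz
        have hzlen : m - σ.length = zz.length := by
          have := congrArg List.length hzz'
          rw [List.length_append] at this
          omega
        apply Subtype.ext; apply Subtype.ext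
        show List.take (m - σ.length) l ++ σ = l
        rw [hzlen, ← hzz', List.take_left]
      right_inv := fun z => by
        apply Subtype.ext
        show List.take (m - σ.length) (z.1 ++ σ) = z.1
        exact List.take_left' z.2 }
  rw [Fintype.card_congr e, card_vector, Fintype.card_fin]

lemma pow3 (n : ℕ) : 2 * n + 1 ≤ 3 ^ n := by
  induction n with
  | zero => simp
  | succ n ih =>
    have : (3:ℕ)^(n+1) = 3 * 3^n := by ring
    omega

lemma pow3' (n : ℕ) (hn : 2 ≤ n) : 2 * n + 3 ≤ 3 ^ n := by
  induction n with
  | zero => omega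
  | succ n ih =>
    rcases Nat.lt_or_ge n 2 with hn2 | hn2
    · interval_cases n
      · omega
      · norm_num
    · have h3 : (3:ℕ)^(n+1) = 3 * 3^n := by ring
      have := ih hn2
      omega

lemma sep {f : KVert k h → ℕ} (hf : IsIndepBroadcast (karyTree k h) f)
    {v w : KVert k h} (hv : 0 < f v) (hw : 0 < f w) (hvw : v ≠ w) :
    max (f v) (f w) + 1 ≤ (karyTree k h).dist v w := by
  have h1 := hf.2 v w hv hvw
  have h2 := hf.2 w v hw (Ne.symm hvw)
  unfold Hears at h1 h2
  push_neg at h1 h2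
  have e1 := h1 hw
  have e2 := h2 hv
  rw [SimpleGraph.dist_comm] at e2
  omega

lemma dist2_of_same_length {u u' : KVert k h} (hne : u ≠ u') (hl : u.1.length = u'.1.length) :
    2 ≤ (karyTree k h).dist u u' := by
  have hp := dist_plus u u'
  have hcs1 := cs_le_left u.1 u'.1
  have hcsne : cs u.1 u'.1 ≠ u.1.length := by
    intro he
    have h1 : meet u.1 u'.1 = u.1 := (meet_suffix_left _ _).eq_of_length he
    have h2 : meet u.1 u'.1 = u'.1 := (meet_suffix_right _ _).eq_of_length (by rw [← hl]; exact he)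
    exact hne (Subtype.ext (h1 ▸ h2))
  omega

lemma swap_good (hh : 1 ≤ h) (hk : 1 ≤ k) (f : KVert k h → ℕ)
    (hf : IsIndepBroadcast (karyTree k h) f)
    (v : KVert k h) (hv1 : 1 ≤ f v) (S : Finset (KVert k h))
    (hSnear : ∀ u ∈ S, (karyTree k h).dist v u ≤ f v)
    (hS2 : ∀ u ∈ S, ∀ u' ∈ S, u ≠ u' → 2 ≤ (karyTree k h).dist u u')
    (hS0 : ∀ u ∈ S, ∀ w, w ≠ v → 0 < f w → max (f w) 1 + 1 ≤ (karyTree k h).dist u w) :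
    ∃ g : KVert k h → ℕ, IsIndepBroadcast (karyTree k h) g ∧
      (∑ u, g u) + f v = (∑ u, f u) + S.card ∧
      (∀ u, 2 ≤ g u → 2 ≤ f u ∧ u ≠ v ∧ g u = f u) ∧
      (∀ u, u ∉ S → u ≠ v → g u = f u) ∧
      (∀ x, 0 < g x → x ∈ S ∨ (x ∉ S ∧ x ≠ v ∧ 0 < f x)) := by
  classical
  have hS0' : ∀ u ∈ S, u ≠ v → f u = 0 := by
    intro u hu hne
    by_contra h0
    have hsep := sep hf hv1 (Nat.pos_of_ne_zero h0) (Ne.symm hne)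
    have hnear := hSnear u hu
    have := le_max_left (f v) (f u)
    omega
  set g : KVert k h → ℕ := fun u => if u ∈ S then 1 else if u = v then 0 else f u with hg
  have hgval : ∀ u, g u = if u ∈ S then 1 else if u = v then 0 else f u := fun u => rfl
  have hsupp : ∀ x, 0 < g x → x ∈ S ∨ (x ∉ S ∧ x ≠ v ∧ 0 < f x) := by
    intro x hx
    rw [hgval] at hx
    by_cases h1 : x ∈ S
    · exact Or.inl h1
    · rw [if_neg h1] at hx
      by_cases h2 : x = v
      · rw [if_pos h2] at hx; omega
      · rw [if_neg h2] at hx; exact Or.inr ⟨h1, h2, hx⟩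
  refine ⟨g, ⟨?_, ?_⟩, ?_, ?_, fun u h1 h2 => by rw [hgval, if_neg h1, if_neg h2], hsupp⟩
  · -- IsBroadcast
    intro u
    rw [hgval]
    split
    · exact ecc_pos hh hk u
    · split
      · exact Nat.zero_le _
      · exact hf.1 u
  · -- independence
    intro x y hx hxy
    rintro ⟨hy, hd⟩
    rcases hsupp x hx with hxS | ⟨hxS, hxv, hxf⟩ <;>
      rcases hsupp y hy with hyS | ⟨hyS, hyv, hyf⟩
    · have := hS2 x hxS y hyS hxy
      have hgy : g y = 1 := by rw [hgval, if_pos hyS]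
      omega
    · have := hS0 x hxS y hyv hyf
      have hgy : g y = f y := by rw [hgval, if_neg hyS, if_neg hyv]
      have := le_max_left (f y) 1
      omega
    · have := hS0 y hyS x hxv hxf
      rw [SimpleGraph.dist_comm] at hd
      have hgy : g y = 1 := by rw [hgval, if_pos hyS]
      have := le_max_right (f x) 1
      omega
    · have hgy : g y = f y := by rw [hgval, if_neg hyS, if_neg hyv]
      exact hf.2 x y hxf hxy ⟨by omega, by omega⟩
  · -- sum
    have hsplitg := Finset.sum_sdiff (f := g) (Finset.subset_univ S)
    have hsplitf := Finset.sum_sdiff (f := f) (Finset.subset_univ S)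
    have hgS : ∑ u ∈ S, g u = S.card := by
      rw [Finset.sum_congr rfl (fun u hu => by rw [hgval, if_pos hu])]
      simp
    by_cases hvS : v ∈ S
    · have hfS : ∑ u ∈ S, f u = f v :=
        Finset.sum_eq_single_of_mem v hvS (fun b hb hbv => hS0' b hb hbv)
      have hout : ∑ u ∈ Finset.univ \ S, g u = ∑ u ∈ Finset.univ \ S, f u := by
        apply Finset.sum_congr rfl
        intro u hu
        rw [Finset.mem_sdiff] at hu
        have huv : u ≠ v := fun e => hu.2 (e ▸ hvS)
        rw [hgval, if_neg hu.2, if_neg huv]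
      omega
    · have hfS : ∑ u ∈ S, f u = 0 :=
        Finset.sum_eq_zero (fun u hu => hS0' u hu (fun e => hvS (e ▸ hu)))
      have hvmem : v ∈ Finset.univ \ S := Finset.mem_sdiff.2 ⟨Finset.mem_univ v, hvS⟩
      have houtg := Finset.sum_eq_sum_sdiff_singleton_add hvmem g
      have houtf := Finset.sum_eq_sum_sdiff_singleton_add hvmem f
      have hgv : g v = 0 := by rw [hgval, if_neg hvS, if_pos rfl]
      have hcong : ∑ u ∈ (Finset.univ \ S) \ {v}, g u = ∑ u ∈ (Finset.univ \ S) \ {v}, f u := by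
        apply Finset.sum_congr rfl
        intro u hu
        rw [Finset.mem_sdiff, Finset.mem_sdiff, Finset.mem_singleton] at hu
        rw [hgval, if_neg hu.1.2, if_neg hu.2]
      omega
  · -- no new big values
    intro u hu
    rw [hgval] at hu
    by_cases h1 : u ∈ S
    · rw [if_pos h1] at hu; omega
    · rw [if_neg h1] at hu
      by_cases h2 : u = v
      · rw [if_pos h2] at hu; omega
      · rw [if_neg h2] at hu
        exact ⟨hu, h2, by rw [hgval, if_neg h1, if_neg h2]⟩

lemma improve (hk : 3 ≤ k) (hh : 1 ≤ h) :
    ∀ (n : ℕ) (f : KVert k h → ℕ), IsIndepBroadcast (karyTree k h) f →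
    (Finset.univ.filter fun u => 2 ≤ f u).card ≤ n → (∃ v, 2 ≤ f v) →
    ∃ g, IsIndepBroadcast (karyTree k h) g ∧ (∑ u, f u) + 1 ≤ ∑ u, g u := by
  intro n
  induction n with
  | zero =>
    rintro f _ hcard ⟨v, hv⟩
    exfalso
    have hmem : v ∈ Finset.univ.filter (fun u => 2 ≤ f u) := by simp [hv]
    have := Finset.card_pos.2 ⟨v, hmem⟩
    omega
  | succ n ih =>
    intro f hf hcard hex
    obtain ⟨v0, hv0⟩ := hex
    have hv0mem : v0 ∈ Finset.univ.filter (fun u => 2 ≤ f u) := by simp [hv0]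
    obtain ⟨v, hvmem, hvmax⟩ :=
      Finset.exists_max_image _ (fun u : KVert k h => u.1.length) ⟨v0, hv0mem⟩
    have hv2 : 2 ≤ f v := (Finset.mem_filter.1 hvmem).2
    have hlev : ∀ w : KVert k h, 2 ≤ f w → w.1.length ≤ v.1.length := by
      intro w hw
      exact hvmax w (by simp [hw])
    have hℓh : v.1.length ≤ h := v.2
    have htle : f v ≤ h + v.1.length := le_trans (hf.1 v) (ecc_le v)
    have hsep : ∀ w, w ≠ v → 0 < f w →
        max (f v) (f w) + 1 ≤ (karyTree k h).dist v w := by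
      intro w hne hw
      exact sep hf (by omega) hw (Ne.symm hne)
    by_cases hdeep : v.1.length + f v ≤ h
    · -- DEEP case
      set ℓ := v.1.length with hℓ
      set t := f v with ht
      set m := ℓ + t - 1 with hm
      have hm1 : m + 1 = ℓ + t := by omega
      set S := Finset.univ.filter (fun u : KVert k h => v.1 <:+ u.1 ∧ u.1.length = m) with hS
      have hcardS : S.card = k ^ (m - ℓ) := card_suffix_level v.1 m (by omega) (by omega)
      have hcount : t + 1 ≤ S.card := by
        rw [hcardS]
        have hmℓ : m - ℓ = t - 1 := by omega
        rw [hmℓ]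
        have h3 := pow3 (t - 1)
        have hkp := Nat.pow_le_pow_left hk (t - 1)
        omega
      have hmemS : ∀ u ∈ S, v.1 <:+ u.1 ∧ u.1.length = m :=
        fun u hu => (Finset.mem_filter.1 hu).2
      have hSnear : ∀ u ∈ S, (karyTree k h).dist v u ≤ t := by
        intro u hu
        obtain ⟨hsuf, hlen⟩ := hmemS u hu
        have hds := dist_of_suffix hsuf
        rw [SimpleGraph.dist_comm]
        omega
      have hS2 : ∀ u ∈ S, ∀ u' ∈ S, u ≠ u' → 2 ≤ (karyTree k h).dist u u' := by
        intro u hu u' hu' hne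
        exact dist2_of_same_length hne (by rw [(hmemS u hu).2, (hmemS u' hu').2])
      have hS0 : ∀ u ∈ S, ∀ w, w ≠ v → 0 < f w →
          max (f w) 1 + 1 ≤ (karyTree k h).dist u w := by
        intro u hu w hwv hw
        obtain ⟨hsuf, hlen⟩ := hmemS u hu
        by_contra hcon
        push_neg at hcon
        have e1 := dist_plus v w
        have e2 := dist_plus u w
        have e3 : cs v.1 u.1 = ℓ := by rw [cs_comm]; exact cs_eq_right hsuf
        have e4 := cs_min v.1 u.1 w.1
        have b1 := cs_le_left v.1 w.1
        have b2 := cs_le_right v.1 w.1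
        have b3 := cs_le_left u.1 w.1
        have b4 := cs_le_right u.1 w.1
        have hsw := hsep w hwv hw
        have hwh := w.2
        rcases Nat.lt_or_ge (f w) 2 with hfw | hfw
        · omega
        · have hlw := hlev w hfw
          omega
      obtain ⟨g, hg, hsum, -, -, -⟩ :=
        swap_good (by omega) (by omega) f hf v (by omega) S hSnear hS2 hS0
      exact ⟨g, hg, by omega⟩
    · -- SHALLOW case
      push_neg at hdeep
      set ℓ := v.1.length with hℓ
      set t := f v with ht
      set e := h - ℓ with hedef
      set xm := min ((t - e) / 2) ℓ with hxm
      have hxm1 : xm ≤ (t - e) / 2 := min_le_left _ _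
      have hxm2 : xm ≤ ℓ := min_le_right _ _
      set σ₀ := v.1.drop xm with hσ₀
      have hσ₀suf : σ₀ <:+ v.1 := List.drop_suffix xm v.1
      have hσ₀len : σ₀.length = ℓ - xm := by rw [hσ₀, List.length_drop]
      set S := Finset.univ.filter (fun u : KVert k h => σ₀ <:+ u.1 ∧ u.1.length = h) with hS
      have hcardS : S.card = k ^ (e + xm) := by
        have := card_suffix_level σ₀ h (by omega) (le_refl h)
        rw [this, hσ₀len]
        congr 1
        omega
      have hmemS : ∀ u ∈ S, σ₀ <:+ u.1 ∧ u.1.length = h :=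
        fun u hu => (Finset.mem_filter.1 hu).2
      have hdiv : 2 * ((t - e) / 2) ≤ t - e := by omega
      have hSnear : ∀ u ∈ S, (karyTree k h).dist v u ≤ t := by
        intro u hu
        obtain ⟨hsuf, hlen⟩ := hmemS u hu
        have e0 := dist_plus v u
        have hcs : ℓ - xm ≤ cs v.1 u.1 := by rw [← hσ₀len]; exact le_cs hσ₀suf hsuf
        omega
      have hS2 : ∀ u ∈ S, ∀ u' ∈ S, u ≠ u' → 2 ≤ (karyTree k h).dist u u' := by
        intro u hu u' hu' hne
        exact dist2_of_same_length hne (by rw [(hmemS u hu).2, (hmemS u' hu').2])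
      have hS0 : ∀ u ∈ S, ∀ w, w ≠ v → 0 < f w →
          max (f w) 1 + 1 ≤ (karyTree k h).dist u w := by
        intro u hu w hwv hw
        obtain ⟨hsuf, hlen⟩ := hmemS u hu
        by_contra hcon
        push_neg at hcon
        have hnear := hSnear u hu
        have e0 := dist_plus v u
        have e1 := dist_plus v w
        have e2 := dist_plus u w
        have e4 := cs_min v.1 u.1 w.1
        have b1 := cs_le_left v.1 w.1
        have b2 := cs_le_right v.1 w.1
        have b3 := cs_le_left u.1 w.1
        have b4 := cs_le_right u.1 w.1
        have b5 := cs_le_left v.1 u.1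
        have hsw := hsep w hwv hw
        have hwh := w.2
        rcases Nat.lt_or_ge (f w) 2 with hfw | hfw
        · omega
        · have hlw := hlev w hfw
          omega
      have hcount : t + 1 ≤ S.card ∨ (k = 3 ∧ t = 3 ∧ e = 0 ∧ xm = 1) := by
        by_cases hc1 : ℓ ≤ (t - e) / 2
        · left
          have hxmeq : xm = ℓ := min_eq_right hc1
          rw [hcardS, hxmeq]
          have hball : e + ℓ = h := by omega
          rw [hball]
          have h3 := pow3 h
          have hkp := Nat.pow_le_pow_left hk h
          omega
        · push_neg at hc1
          have hxmeq : xm = (t - e) / 2 := min_eq_left (by omega)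
          rcases Nat.eq_zero_or_pos e with he0 | he1
          · rcases (show t = 2 ∨ t = 3 ∨ 4 ≤ t by omega) with h2 | h3 | h4
            · left
              have : e + xm = 1 := by omega
              rw [hcardS, this, pow_one]
              omega
            · by_cases hk4 : 4 ≤ k
              · left
                have : e + xm = 1 := by omega
                rw [hcardS, this, pow_one]
                omega
              · right
                refine ⟨by omega, by omega, by omega, by omega⟩
            · left
              have hxm4 : 2 ≤ xm := by omega
              have hexm : e + xm = t / 2 := by omega
              rw [hcardS, hexm]
              have h3 := pow3' (t / 2) (by omega)
              have hkp := Nat.pow_le_pow_left hk (t / 2)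
              omega
          · left
            have h2β : t ≤ 2 * (e + xm) := by omega
            have h3 := pow3 (e + xm)
            have hkp := Nat.pow_le_pow_left hk (e + xm)
            rw [hcardS]
            omega
      obtain ⟨g, hg, hsum, hbig, hval, hsupp⟩ :=
        swap_good (by omega) (by omega) f hf v (by omega) S hSnear hS2 hS0
      rcases hcount with hcount | ⟨hk3', ht3, he0, hxm1'⟩
      · exact ⟨g, hg, by omega⟩
      · -- exception k=3, t=3, leaf
        have hcard3 : S.card = 3 := by rw [hcardS, he0, hxm1', hk3']; norm_num
        have hsume : ∑ u, g u = ∑ u, f u := by omega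
        have hsub : Finset.univ.filter (fun u => 2 ≤ g u)
            ⊆ (Finset.univ.filter (fun u => 2 ≤ f u)).erase v := by
          intro u hu
          have hu2 : 2 ≤ g u := (Finset.mem_filter.1 hu).2
          obtain ⟨hfu, huv, -⟩ := hbig u hu2
          exact Finset.mem_erase.2 ⟨huv, by simp [hfu]⟩
        have hcard' : (Finset.univ.filter (fun u => 2 ≤ g u)).card ≤ n := by
          have h1 := Finset.card_le_card hsub
          have h2 := Finset.card_erase_of_mem hvmem
          have hpos : 0 < (Finset.univ.filter (fun u => 2 ≤ f u)).card :=
            Finset.card_pos.2 ⟨v, hvmem⟩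
          omega
        by_cases hex2 : ∃ w, 2 ≤ g w
        · obtain ⟨g', hg', hlt⟩ := ih g hg hcard' hex2
          exact ⟨g', hg', by omega⟩
        · push_neg at hex2
          have hℓeq : ℓ = h := by omega
          have hh2 : 2 ≤ h := by omega
          set G : KVert k h := ⟨v.1.drop 2, (List.drop_suffix 2 v.1).length_le.trans v.2⟩ with hG
          have hGlen : G.1.length = h - 2 := by
            show (v.1.drop 2).length = h - 2
            rw [List.length_drop]
            omega
          have hdvG : (karyTree k h).dist v G = 2 := by
            have := dist_of_suffix (show G.1 <:+ v.1 from List.drop_suffix 2 v.1)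
            omega
          have hGS : G ∉ S := by
            intro hGS
            have := (hmemS G hGS).2
            omega
          have hGv : G ≠ v := by
            intro heq
            rw [heq] at hGlen
            omega
          have hfG : f G = 0 := by
            by_contra h0
            have := hsep G hGv (Nat.pos_of_ne_zero h0)
            omega
          have hgG : g G = 0 := by rw [hval G hGS hGv, hfG]
          -- G is at distance 2 from every g-broadcaster
          have hGfar : ∀ x, 0 < g x → x ≠ G → 2 ≤ (karyTree k h).dist x G := by
            intro x hx hxG
            rcases hsupp x hx with hxS | ⟨hxS, hxv, hxf⟩
            · -- x ∈ S : G is an ancestor, distance 2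
              obtain ⟨hsuf, hlen⟩ := hmemS x hxS
              have hGσ : G.1 <:+ σ₀ := by
                show v.1.drop 2 <:+ σ₀
                have : σ₀.drop 1 = v.1.drop 2 := by
                  rw [hσ₀, List.drop_drop]
                  congr 1
                  omega
                rw [← this]
                exact List.drop_suffix 1 σ₀
              have hGx : G.1 <:+ x.1 := hGσ.trans hsuf
              have := dist_of_suffix hGx
              omega
            · -- old broadcaster: use triangle via v
              have hsx := hsep x hxv hxf
              have htri : (karyTree k h).dist v x ≤
                  (karyTree k h).dist v G + (karyTree k h).dist G x :=
                tree_connected.dist_triangle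
              rw [SimpleGraph.dist_comm (G := karyTree k h) (u := x) (v := G)]
              omega
          refine ⟨Function.update g G 1, ⟨?_, ?_⟩, ?_⟩
          · intro u
            by_cases huG : u = G
            · rw [huG, Function.update_self]
              exact ecc_pos hh (by omega) G
            · rw [Function.update_of_ne huG]
              exact hg.1 u
          · intro x y hx hxy
            rintro ⟨hy, hd⟩
            by_cases hyG : y = G
            · subst hyG
              rw [Function.update_self] at hd hy
              by_cases hxG : x = G
              · exact hxy (hxG)
              · rw [Function.update_of_ne hxG] at hx
                have := hGfar x hx hxG
                omega
            · rw [Function.update_of_ne hyG] at hy hd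
              by_cases hxG : x = G
              · subst hxG
                have hyle := hex2 y
                have := hGfar y hy hyG
                rw [SimpleGraph.dist_comm] at this
                omega
              · rw [Function.update_of_ne hxG] at hx
                exact hg.2 x y hx hxy ⟨hy, hd⟩
          · have hupd := Finset.sum_update_of_mem (Finset.mem_univ G) g 1
            have hsplit := Finset.sum_eq_sum_sdiff_singleton_add (Finset.mem_univ G) g
            omega

lemma near_leaf {u w : KVert k h} (hu : u.1.length = h)
    (hd : (karyTree k h).dist u w ≤ 1) : w = u ∨ w.1 = u.1.tail := by
  have hp := dist_plus u w
  have b1 := cs_le_left u.1 w.1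
  have b2 := cs_le_right u.1 w.1
  have hwh := w.2
  rcases Nat.eq_zero_or_pos ((karyTree k h).dist u w) with h0 | h1
  · left
    have hcs : cs u.1 w.1 = w.1.length := by omega
    have hcs2 : cs u.1 w.1 = u.1.length := by omega
    have h1 : meet u.1 w.1 = u.1 := (meet_suffix_left _ _).eq_of_length hcs2
    have h2 : meet u.1 w.1 = w.1 := (meet_suffix_right _ _).eq_of_length hcs
    exact Subtype.ext (h2.symm.trans h1)
  · right
    have hd1 : (karyTree k h).dist u w = 1 := by omega
    have hcs : cs u.1 w.1 = w.1.length := by omega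
    have h2 : meet u.1 w.1 = w.1 := (meet_suffix_right _ _).eq_of_length hcs
    have hsufw : w.1 <:+ u.1 := h2 ▸ meet_suffix_left u.1 w.1
    have hlw : w.1.length = h - 1 := by omega
    exact suffix_eq_of_length hsufw (List.tail_suffix u.1)
      (by rw [hlw, List.length_tail, hu])

lemma sum_le_alphaB (g : KVert k h → ℕ) (hg : IsIndepBroadcast (karyTree k h) g) :
    ∑ u, g u ≤ alphaB (karyTree k h) := by
  apply le_csSup
  · refine ⟨∑ u, ecc (karyTree k h) u, ?_⟩
    rintro w ⟨f', hf', rfl⟩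
    exact Finset.sum_le_sum (fun u _ => hf'.1 u)
  · exact ⟨g, hg, rfl⟩

end S6

theorem stmt6' (k h : ℕ) (hk : 3 ≤ k) (hh : 1 ≤ h) (f : KVert k h → ℕ)
    (hf : IsIndepBroadcast (karyTree k h) f) (hmax : ∑ v, f v = alphaB (karyTree k h)) :
    (∀ v : KVert k h, f v ≤ 1) ∧ (∀ l : KVert k h, IsKLeaf k h l → f l = 1) := by
  have part1 : ∀ v : KVert k h, f v ≤ 1 := by
    by_contra hcon
    push_neg at hcon
    obtain ⟨v, hv⟩ := hcon
    obtain ⟨g, hg, hlt⟩ := S6.improve hk hh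
      (Finset.univ.filter fun u => 2 ≤ f u).card f hf (le_refl _) ⟨v, by omega⟩
    have := S6.sum_le_alphaB g hg
    omega
  refine ⟨part1, ?_⟩
  intro l hl
  by_contra hne
  have hl0 : f l = 0 := by have := part1 l; omega
  have hlh : l.1.length = h := hl
  have hlne : l.1 ≠ [] := by
    intro heq
    rw [heq] at hlh
    simp at hlh
    omega
  set p : KVert k h := ⟨l.1.tail, (List.tail_suffix l.1).length_le.trans l.2⟩ with hp
  have hplen : p.1.length = h - 1 := by
    show l.1.tail.length = h - 1
    rw [List.length_tail, hlh]
  have hlp : l ≠ p := by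
    intro heq
    have : l.1.length = p.1.length := by rw [heq]
    omega
  have hfp := part1 p
  rcases Nat.eq_zero_or_pos (f p) with hp0 | hp1
  · -- parent silent: just broadcast at l
    set g := Function.update f l 1 with hg
    have hgind : IsIndepBroadcast (karyTree k h) g := by
      constructor
      · intro u
        by_cases hul : u = l
        · rw [hul, hg, Function.update_self]
          exact S6.ecc_pos hh (by omega) l
        · rw [hg, Function.update_of_ne hul]
          exact hf.1 u
      · intro x y hx hxy
        rintro ⟨hy, hd⟩
        by_cases hyl : y = l
        · rw [hyl] at hd hxy
          rw [hg, Function.update_self] at hd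
          by_cases hxl : x = l
          · exact hxy hxl
          · rw [hg, Function.update_of_ne hxl] at hx
            rw [SimpleGraph.dist_comm] at hd
            rcases S6.near_leaf hlh hd with heq | heq
            · exact hxl heq
            · have hxp : x = p := Subtype.ext heq
              rw [hxp] at hx
              omega
        · rw [hg, Function.update_of_ne hyl] at hy hd
          by_cases hxl : x = l
          · rw [hxl] at hd
            have hfy := part1 y
            have hd1 : (karyTree k h).dist l y ≤ 1 := by omega
            rcases S6.near_leaf hlh hd1 with heq | heq
            · exact hyl heq
            · have hyp : y = p := Subtype.ext heq
              rw [hyp] at hy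
              omega
          · rw [hg, Function.update_of_ne hxl] at hx
            exact hf.2 x y hx hxy ⟨hy, hd⟩
    have hgsum : ∑ u, g u = (∑ u, f u) + 1 := by
      have hupd := Finset.sum_update_of_mem (Finset.mem_univ l) f 1
      have hsplit := Finset.sum_eq_sum_sdiff_singleton_add (Finset.mem_univ l) f
      rw [hg]
      omega
    have := S6.sum_le_alphaB g hgind
    omega
  · -- parent broadcasts: replace parent by all its children
    set C := Finset.univ.filter (fun u : KVert k h => p.1 <:+ u.1 ∧ u.1.length = h) with hC
    have hcardC : C.card = k := by
      have := S6.card_suffix_level p.1 h (by omega) (le_refl h)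
      rw [hC, this, hplen]
      have : h - (h - 1) = 1 := by omega
      rw [this, pow_one]
    have hmemC : ∀ u ∈ C, p.1 <:+ u.1 ∧ u.1.length = h :=
      fun u hu => (Finset.mem_filter.1 hu).2
    have hCnear : ∀ u ∈ C, (karyTree k h).dist p u ≤ f p := by
      intro u hu
      obtain ⟨hsuf, hlen⟩ := hmemC u hu
      have := S6.dist_of_suffix hsuf
      rw [SimpleGraph.dist_comm]
      omega
    have hC2 : ∀ u ∈ C, ∀ u' ∈ C, u ≠ u' → 2 ≤ (karyTree k h).dist u u' := by
      intro u hu u' hu' hne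
      exact S6.dist2_of_same_length hne (by rw [(hmemC u hu).2, (hmemC u' hu').2])
    have hC0 : ∀ u ∈ C, ∀ w, w ≠ p → 0 < f w →
        max (f w) 1 + 1 ≤ (karyTree k h).dist u w := by
      intro u hu w hwp hw
      obtain ⟨hsuf, hlen⟩ := hmemC u hu
      have hfw := part1 w
      have hmax1 : max (f w) 1 = 1 := by omega
      rw [hmax1]
      by_contra hcon
      push_neg at hcon
      have hd1 : (karyTree k h).dist u w ≤ 1 := by omega
      rcases S6.near_leaf hlen hd1 with heq | heq
      · -- w = u : but u is heard by p, so f u = 0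
        have hup : u ≠ p := by
          intro hupe
          have : u.1.length = p.1.length := by rw [hupe]
          omega
        have hfu : f u = 0 := by
          by_contra h0
          have := S6.sep hf hp1 (Nat.pos_of_ne_zero h0) (Ne.symm hup)
          have := hCnear u hu
          have := le_max_left (f p) (f u)
          omega
        rw [heq] at hw
        omega
      · -- w is the parent of u, which is p
        have hwp' : w.1 = p.1 := by
          rw [heq]
          exact (S6.suffix_eq_of_length (List.tail_suffix u.1) hsuf
            (by rw [List.length_tail, hlen, hplen])).symm ▸ rfl
        exact hwp (Subtype.ext hwp')
    obtain ⟨g, hgind, hgsum, -, -, -⟩ :=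
      S6.swap_good hh (by omega) f hf p hp1 C hCnear hC2 hC0
    have := S6.sum_le_alphaB g hgind
    omega


/-- in a maximum-weight independent broadcast on a perfect `k`-ary tree with
`k ≥ 3` and `h ≥ 1`, every vertex broadcasts with power at most `1` and every leaf
broadcasts with power exactly `1`. -/
theorem stmt6 (k h : ℕ) (hk : 3 ≤ k) (hh : 1 ≤ h) (f : KVert k h → ℕ)
    (hf : IsIndepBroadcast (karyTree k h) f) (hmax : ∑ v, f v = alphaB (karyTree k h)) :
    (∀ v : KVert k h, f v ≤ 1) ∧ (∀ l : KVert k h, IsKLeaf k h l → f l = 1) :=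
  stmt6' k h hk hh f hf hmax
end

section
/- Let T_h^k be a perfect k-ary tree with k ≥ 3 and h ≥ 1. Then α_b(T_h^k) equals the independence number α(T_h^k); explicitly, α_b(T_h^k) = (k^{2(m+1)} − 1)/(k^2 − 1) if h = 2m is even, and α_b(T_h^k) = k · (k^{2(m+1)} − 1)/(k^2 − 1) if h = 2m + 1 is odd. -/
variable {V : Type*}

/-- The independence number: the maximum size of a set of pairwise non-adjacent vertices. -/
noncomputable def indepNum (G : SimpleGraph V) [Fintype V] : ℕ :=
  sSup {n | ∃ s : Finset V, (∀ x ∈ s, ∀ y ∈ s, x ≠ y → ¬ G.Adj x y) ∧ n = s.card}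


namespace Kary


open SimpleGraph List

variable {k h : ℕ}

lemma exists_walk (x u : List (Fin k)) (hw : (x ++ u).length ≤ h) (hu : u.length ≤ h) :
    ∃ p : (karyTree k h).Walk ⟨x ++ u, hw⟩ ⟨u, hu⟩, p.length = x.length := by
  induction x with
  | nil =>
    refine ⟨(SimpleGraph.Walk.nil).copy (by simp) rfl, by simp⟩
  | cons a x ih =>
    have hw' : (x ++ u).length ≤ h := by simpa using Nat.le_of_succ_le (by simpa using hw)
    obtain ⟨p, hp⟩ := ih hw'
    have hadj : (karyTree k h).Adj ⟨a :: x ++ u, hw⟩ ⟨x ++ u, hw'⟩ := Or.inl ⟨a, rfl⟩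
    exact ⟨SimpleGraph.Walk.cons hadj p, by simp [hp]⟩

lemma dist_append_le (x u : List (Fin k)) (hw : (x ++ u).length ≤ h) (hu : u.length ≤ h) :
    (karyTree k h).dist ⟨x ++ u, hw⟩ ⟨u, hu⟩ ≤ x.length := by
  obtain ⟨p, hp⟩ := exists_walk x u hw hu
  simpa [hp] using SimpleGraph.dist_le p

lemma dist_suffix_le (v w : KVert k h) (x : List (Fin k)) (hx : v.1 = x ++ w.1) :
    (karyTree k h).dist v w ≤ x.length := by
  have h1 : v = ⟨x ++ w.1, by rw [← hx]; exact v.2⟩ := Subtype.ext hx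
  rw [h1]
  exact dist_append_le x w.1 _ w.2

lemma dist_drop_le (v : KVert k h) (m : ℕ) (hm : (v.1.drop m).length ≤ h) :
    (karyTree k h).dist v ⟨v.1.drop m, hm⟩ ≤ m := by
  have := dist_suffix_le v ⟨v.1.drop m, hm⟩ (v.1.take m) (by simp)
  calc (karyTree k h).dist v ⟨v.1.drop m, hm⟩ ≤ (v.1.take m).length := this
    _ ≤ m := by simp

def kroot (k h : ℕ) : KVert k h := ⟨[], by simp⟩

lemma reachable_root (v : KVert k h) : (karyTree k h).Reachable v (kroot k h) := by
  obtain ⟨p, _⟩ := exists_walk v.1 [] (by simpa using v.2) (by simp)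
  constructor
  exact (p.copy (Subtype.ext (by simp)) rfl)

lemma connected : (karyTree k h).Connected := by
  rw [SimpleGraph.connected_iff]
  refine ⟨fun u v => (reachable_root u).trans (reachable_root v).symm, ⟨kroot k h⟩⟩

lemma dist_root_le (v : KVert k h) : (karyTree k h).dist v (kroot k h) ≤ v.1.length := by
  exact dist_suffix_le v (kroot k h) v.1 (by simp [kroot])

lemma dist_le_add (u v : KVert k h) :
    (karyTree k h).dist u v ≤ u.1.length + v.1.length := by
  calc (karyTree k h).dist u v
      ≤ (karyTree k h).dist u (kroot k h) + (karyTree k h).dist (kroot k h) v :=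
        connected.dist_triangle
    _ ≤ u.1.length + v.1.length := by
        have h1 := dist_root_le u
        have h2 : (karyTree k h).dist (kroot k h) v ≤ v.1.length := by
          rw [SimpleGraph.dist_comm]; exact dist_root_le v
        omega

lemma adj_length {x y : KVert k h} (hxy : (karyTree k h).Adj x y) :
    x.1.length = y.1.length + 1 ∨ y.1.length = x.1.length + 1 := by
  rcases hxy with ⟨a, ha⟩ | ⟨a, ha⟩
  · left; rw [ha]; simp
  · right; rw [ha]; simp



variable {k h : ℕ}

noncomputable def Good (k h : ℕ) : Finset (KVert k h) :=
  Finset.univ.filter (fun w => w.1.length % 2 = h % 2)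

noncomputable def levelSet (k h : ℕ) (t : ℕ) : Finset (KVert k h) :=
  Finset.univ.filter (fun w => w.1.length = t)

lemma card_levelSet (hk : 0 < k) (t : ℕ) (ht : t ≤ h) : (levelSet k h t).card = k ^ t := by
  have himg : levelSet k h t =
      (Finset.univ : Finset (Fin t → Fin k)).image
        (fun g => (⟨List.ofFn g, by simp [ht]⟩ : KVert k h)) := by
    ext w
    simp only [levelSet, Finset.mem_filter, Finset.mem_univ, true_and, Finset.mem_image]
    constructor
    · intro hw
      refine ⟨fun i => w.1.get (Fin.cast hw.symm i), ?_⟩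
      apply Subtype.ext
      apply List.ext_get (by simp [hw])
      intro n h1 h2
      simp
    · rintro ⟨g, rfl⟩
      simp
  rw [himg, Finset.card_image_of_injective _ ?_, Finset.card_univ]
  · simp
  · intro g g' hgg'
    exact List.ofFn_injective (congrArg Subtype.val hgg')

lemma good_card (hk : 0 < k) :
    (Good k h).card = ∑ t ∈ (Finset.range (h+1)).filter (· % 2 = h % 2), k ^ t := by
  rw [Finset.card_eq_sum_card_fiberwise
    (f := fun w : KVert k h => w.1.length)
    (t := (Finset.range (h+1)).filter (· % 2 = h % 2)) ?_]
  · apply Finset.sum_congr rfl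
    intro t ht
    simp only [Finset.mem_filter, Finset.mem_range] at ht
    rw [← card_levelSet (h := h) hk t (by omega)]
    congr 1
    ext w
    simp only [Good, levelSet, Finset.mem_filter, Finset.mem_univ, true_and]
    constructor
    · rintro ⟨_, h2⟩; exact h2
    · intro hw; exact ⟨by rw [hw]; exact ht.2, hw⟩
  · intro x hx
    simp only [Good, Finset.mem_coe, Finset.mem_filter, Finset.mem_univ, true_and] at hx
    simp only [Finset.mem_coe, Finset.mem_filter, Finset.mem_range]
    exact ⟨by have := x.2; omega, hx⟩

lemma geom_aux (x : ℕ) (hx : 1 ≤ x) (m : ℕ) :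
    (x - 1) * (∑ i ∈ Finset.range m, x ^ i) = x ^ m - 1 := by
  induction m with
  | zero => simp
  | succ n ih =>
    rw [Finset.sum_range_succ, Nat.mul_add, ih]
    have h1 : 1 ≤ x ^ n := Nat.one_le_pow _ _ hx
    have h2 : (x - 1) * x ^ n = x * x ^ n - x ^ n := by
      rw [Nat.sub_mul, one_mul]
    rw [h2, pow_succ]
    have h3 : x ^ n ≤ x * x ^ n := Nat.le_mul_of_pos_left _ hx
    have h4 : x ^ n * x = x * x ^ n := by ring
    omega

lemma geom_div (x : ℕ) (hx : 2 ≤ x) (m : ℕ) :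
    (∑ i ∈ Finset.range m, x ^ i) = (x ^ m - 1) / (x - 1) := by
  symm
  apply Nat.div_eq_of_eq_mul_left (by omega)
  rw [← geom_aux x (by omega) m, Nat.mul_comm]

lemma ksq (hk : 2 ≤ k) : 2 ≤ k ^ 2 := by nlinarith

lemma good_card_even (hk : 2 ≤ k) (m : ℕ) (hm : h = 2 * m) :
    (Good k h).card = (k ^ (2 * (m+1)) - 1) / (k ^ 2 - 1) := by
  rw [good_card (by omega)]
  have hset : (Finset.range (h+1)).filter (· % 2 = h % 2) =
      (Finset.range (m+1)).image (fun i => 2 * i) := by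
    ext t
    simp only [Finset.mem_filter, Finset.mem_range, Finset.mem_image]
    constructor
    · rintro ⟨h1, h2⟩; refine ⟨t/2, ?_, ?_⟩ <;> omega
    · rintro ⟨i, hi, rfl⟩; omega
  rw [hset, Finset.sum_image (by intro a _ b _ hab; simp only at hab; omega)]
  have hpm : ∀ i, k ^ (2 * i) = (k ^ 2) ^ i := fun i => by rw [← pow_mul]
  simp_rw [hpm]
  rw [geom_div (k^2) (ksq hk) (m+1), ← pow_mul]

lemma good_card_odd (hk : 2 ≤ k) (m : ℕ) (hm : h = 2 * m + 1) :
    (Good k h).card = k * ((k ^ (2 * (m+1)) - 1) / (k ^ 2 - 1)) := by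
  rw [good_card (by omega)]
  have hset : (Finset.range (h+1)).filter (· % 2 = h % 2) =
      (Finset.range (m+1)).image (fun i => 2 * i + 1) := by
    ext t
    simp only [Finset.mem_filter, Finset.mem_range, Finset.mem_image]
    constructor
    · rintro ⟨h1, h2⟩; refine ⟨t/2, ?_, ?_⟩ <;> omega
    · rintro ⟨i, hi, rfl⟩; omega
  rw [hset, Finset.sum_image (by intro a _ b _ hab; simp only at hab; omega)]
  have hpm : ∀ i, k ^ (2 * i + 1) = k * (k ^ 2) ^ i := fun i => by
    rw [← pow_mul, pow_succ, Nat.mul_comm]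
  simp_rw [hpm]
  rw [← Finset.mul_sum, geom_div (k^2) (ksq hk) (m+1), ← pow_mul]



variable {k h : ℕ}

lemma good_mem_iff {w : KVert k h} : w ∈ Good k h ↔ w.1.length % 2 = h % 2 := by
  simp [Good]

lemma good_not_adj {x y : KVert k h} (hx : x ∈ Good k h) (hy : y ∈ Good k h) :
    ¬ (karyTree k h).Adj x y := by
  intro hadj
  rw [good_mem_iff] at hx hy
  rcases adj_length hadj with h1 | h1 <;> omega

lemma indep_card_le (hk : 0 < k) (s : Finset (KVert k h))
    (hs : ∀ x ∈ s, ∀ y ∈ s, x ≠ y → ¬ (karyTree k h).Adj x y) :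
    s.card ≤ (Good k h).card := by
  classical
  apply Finset.card_le_card_of_injOn
    (fun x => if hx : x.1.length % 2 = h % 2 then x else
      ⟨(⟨0, hk⟩ : Fin k) :: x.1, by have h2 := x.2; simp only [List.length_cons]; omega⟩)
  · intro x hxs
    by_cases hx : x.1.length % 2 = h % 2
    · simpa [hx, good_mem_iff] using hx
    · simp only [hx, dite_false]
      rw [Finset.mem_coe, good_mem_iff]
      simp only [List.length_cons]
      omega
  · intro x hxs y hys hxy
    by_cases hx : x.1.length % 2 = h % 2 <;> by_cases hy : y.1.length % 2 = h % 2 <;>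
      simp only [hx, hy, dite_true, dite_false] at hxy
    · exact hxy
    · exfalso
      have hlen : x.1.length = y.1.length + 1 := by
        have := congrArg (fun z : KVert k h => z.1.length) hxy
        simpa using this
      have hadj : (karyTree k h).Adj x y := Or.inl ⟨⟨0, hk⟩, by rw [hxy]⟩
      have hne : x ≠ y := by
        intro he; rw [he] at hlen; omega
      exact hs x hxs y hys hne hadj
    · exfalso
      have hlen : y.1.length = x.1.length + 1 := by
        have := congrArg (fun z : KVert k h => z.1.length) hxy
        simpa using this.symm
      have hadj : (karyTree k h).Adj x y := Or.inr ⟨⟨0, hk⟩, by rw [← hxy]⟩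
      have hne : x ≠ y := by
        intro he; rw [he] at hlen; omega
      exact hs x hxs y hys hne hadj
    · have := congrArg Subtype.val hxy
      simp only [List.cons.injEq] at this
      exact Subtype.ext this.2

lemma indepNum_eq (hk : 0 < k) : _root_.indepNum (karyTree k h) = (Good k h).card := by
  rw [_root_.indepNum]
  apply _root_.le_antisymm
  · apply csSup_le
    · exact ⟨0, ∅, by simp, by simp⟩
    · rintro n ⟨s, hs, rfl⟩
      exact indep_card_le hk s hs
  · apply le_csSup
    · refine ⟨(Good k h).card, ?_⟩
      rintro n ⟨s, hs, rfl⟩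
      exact indep_card_le hk s hs
    · exact ⟨Good k h, fun x hx y hy hne => good_not_adj hx hy, rfl⟩

lemma ecc_le (v : KVert k h) : ecc (karyTree k h) v ≤ h + v.1.length := by
  apply Finset.sup_le
  intro u _
  have h1 := dist_le_add u v
  have h2 := u.2
  omega

lemma ecc_pos (hk : 0 < k) (hh : 1 ≤ h) (v : KVert k h) : 1 ≤ ecc (karyTree k h) v := by
  classical
  set u : KVert k h := if v.1 = [] then ⟨[(⟨0, hk⟩ : Fin k)], by simpa using hh⟩ else kroot k h with hu
  have hne : u ≠ v := by
    by_cases hv : v.1 = []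
    · simp only [hu, hv, if_true]
      intro he
      have := congrArg Subtype.val he
      rw [hv] at this
      simp at this
    · simp only [hu, hv, if_false]
      intro he
      exact hv (by rw [← he]; rfl)
  have hd : 0 < (karyTree k h).dist u v := connected.pos_dist_of_ne hne
  calc 1 ≤ (karyTree k h).dist u v := hd
    _ ≤ ecc (karyTree k h) v :=
      Finset.le_sup (f := fun u => (karyTree k h).dist u v) (Finset.mem_univ u)

noncomputable def unitf (k h : ℕ) : KVert k h → ℕ := fun v => if v ∈ Good k h then 1 else 0

lemma unitf_indep (hk : 0 < k) (hh : 1 ≤ h) :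
    IsIndepBroadcast (karyTree k h) (unitf k h) := by
  constructor
  · intro v
    unfold unitf
    split
    · exact ecc_pos hk hh v
    · exact Nat.zero_le _
  · intro v w h0 hne hears
    obtain ⟨hw0, hdist⟩ := hears
    unfold unitf at h0 hw0 hdist
    have hvg : v ∈ Good k h := by by_contra hc; rw [if_neg hc] at h0; exact absurd h0 (by simp)
    have hwg : w ∈ Good k h := by by_contra hc; rw [if_neg hc] at hw0; exact absurd hw0 (by simp)
    have h1 : (karyTree k h).dist v w ≤ 1 := by rwa [if_pos hwg] at hdist
    have h2 : 0 < (karyTree k h).dist v w := connected.pos_dist_of_ne hne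
    have h3 : (karyTree k h).dist v w = 1 := by omega
    rw [SimpleGraph.dist_eq_one_iff_adj] at h3
    exact good_not_adj hvg hwg h3

lemma unitf_sum (hk : 0 < k) : ∑ v, unitf k h v = (Good k h).card := by
  unfold unitf
  rw [Finset.sum_ite_mem]
  simp


end Kary
namespace Kary

variable {k h : ℕ}

/-- The shape of a claimed vertex: `w = x ++ (v.drop j)` with `j ≤ |x|` and `j + |x| ≤ f v`. -/
def Shape (f : KVert k h → ℕ) (v w : KVert k h) : Prop :=
  ∃ (x : List (Fin k)) (j : ℕ), j ≤ x.length ∧ j + x.length ≤ f v ∧ w.1 = x ++ v.1.drop j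

lemma shape_asym (f : KVert k h → ℕ) (hf : IsIndepBroadcast (karyTree k h) f)
    {u v w : KVert k h} (hvu : v ≠ u) (hu : 0 < f u) (hv : 0 < f v)
    {x y : List (Fin k)} {j i : ℕ}
    (hjx : j ≤ x.length) (hwv : w.1 = x ++ v.1.drop j)
    (hiy : i ≤ y.length) (hifu : i + y.length ≤ f u) (hwu : w.1 = y ++ u.1.drop i)
    (hxy : x.length ≤ y.length) : False := by
  have hkey : u.1.drop i = v.1.drop (j + (y.length - x.length)) := by
    have h1 : u.1.drop i = w.1.drop y.length := by rw [hwu, List.drop_left]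
    have h2 : w.1.drop x.length = v.1.drop j := by rw [hwv, List.drop_left]
    have h3 : w.1.drop y.length = (w.1.drop x.length).drop (y.length - x.length) := by
      rw [List.drop_drop]
      congr 1
      omega
    rw [h1, h3, h2, List.drop_drop]
  have hmlen : (u.1.drop i).length ≤ h := by
    rw [List.length_drop]
    have := u.2
    omega
  set m : KVert k h := ⟨u.1.drop i, hmlen⟩ with hm
  have hdvm : (karyTree k h).dist v m ≤ j + (y.length - x.length) := by
    have hmm : m = ⟨v.1.drop (j + (y.length - x.length)), by rw [← hkey]; exact hmlen⟩ :=
      Subtype.ext hkey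
    rw [hmm]
    exact dist_drop_le v _ _
  have hdmu : (karyTree k h).dist m u ≤ i := by
    rw [SimpleGraph.dist_comm]
    exact dist_drop_le u i hmlen
  have hdvu : (karyTree k h).dist v u ≤ f u := by
    calc (karyTree k h).dist v u
        ≤ (karyTree k h).dist v m + (karyTree k h).dist m u := connected.dist_triangle
      _ ≤ (j + (y.length - x.length)) + i := Nat.add_le_add hdvm hdmu
      _ ≤ f u := by omega
  exact hf.2 v u hv hvu ⟨hu, hdvu⟩

lemma shape_disjoint (f : KVert k h → ℕ) (hf : IsIndepBroadcast (karyTree k h) f)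
    {u v w : KVert k h} (huv : u ≠ v) (hu : 0 < f u) (hv : 0 < f v)
    (h1 : Shape f v w) (h2 : Shape f u w) : False := by
  obtain ⟨x, j, hjx, hjf, hwv⟩ := h1
  obtain ⟨y, i, hiy, hif, hwu⟩ := h2
  rcases le_total x.length y.length with hle | hle
  · exact shape_asym f hf (Ne.symm huv) hu hv hjx hwv hiy hif hwu hle
  · exact shape_asym f hf huv hv hu hiy hwu hjx hjf hwv hle

/-- Totalized constructor for vertices. -/
noncomputable def mkv (l : List (Fin k)) : KVert k h :=
  if hl : l.length ≤ h then ⟨l, hl⟩ else ⟨[], by simp⟩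

lemma mkv_val {l : List (Fin k)} (hl : l.length ≤ h) : (mkv (h := h) l).1 = l := by
  rw [mkv, dif_pos hl]

/-- An injection `Fin (k-1) → Fin k` avoiding `b`. -/
def avoid (hk : 3 ≤ k) (b : Fin k) (i : Fin (k - 1)) : Fin k :=
  if i.1 < b.1 then ⟨i.1, by have := i.2; omega⟩ else ⟨i.1 + 1, by have := i.2; omega⟩

lemma avoid_ne (hk : 3 ≤ k) (b : Fin k) (i : Fin (k - 1)) : avoid hk b i ≠ b := by
  rw [avoid]
  split <;> · simp only [Fin.ne_iff_vne]; omega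

lemma avoid_inj (hk : 3 ≤ k) (b : Fin k) {i i' : Fin (k - 1)}
    (he : avoid hk b i = avoid hk b i') : i = i' := by
  have h1 := congrArg Fin.val he
  rw [avoid, avoid] at h1
  apply Fin.ext
  split at h1 <;> split at h1 <;> simp only at h1 <;> omega

end Kary
namespace Kary

variable {k h : ℕ}

noncomputable def kdown (v : KVert k h) (t : ℕ) : Finset (KVert k h) :=
  (Finset.univ : Finset (Fin t → Fin k)).image (fun g => mkv (List.ofFn g ++ v.1))

noncomputable def kshell (hk : 3 ≤ k) (v : KVert k h) (jm : ℕ) : Finset (KVert k h) :=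
  (Finset.univ : Finset ((Fin (h - v.1.length + jm) → Fin k) × Fin (k - 1))).image
    (fun p => mkv (List.ofFn p.1 ++
      (avoid hk (v.1.getD jm ⟨0, by omega⟩) p.2) :: v.1.drop (jm + 1)))

lemma card_kdown (v : KVert k h) (t : ℕ) (ht : t + v.1.length ≤ h) :
    (kdown v t).card = k ^ t := by
  rw [kdown, Finset.card_image_of_injective _ ?_, Finset.card_univ]
  · simp
  · intro g g' he
    have e1 : (List.ofFn g ++ v.1).length ≤ h := by
      rw [List.length_append, List.length_ofFn]; omega
    have e2 : (List.ofFn g' ++ v.1).length ≤ h := by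
      rw [List.length_append, List.length_ofFn]; omega
    have := congrArg Subtype.val he
    rw [mkv_val e1, mkv_val e2] at this
    exact List.ofFn_injective (List.append_cancel_right this)

lemma mem_kdown {v : KVert k h} {t : ℕ} (ht : t + v.1.length ≤ h) {w : KVert k h}
    (hw : w ∈ kdown v t) : ∃ g : Fin t → Fin k, w.1 = List.ofFn g ++ v.1 := by
  rw [kdown, Finset.mem_image] at hw
  obtain ⟨g, _, rfl⟩ := hw
  exact ⟨g, mkv_val (by rw [List.length_append, List.length_ofFn]; omega)⟩

lemma kdown_suffix {v : KVert k h} {t : ℕ} (ht : t + v.1.length ≤ h) {w : KVert k h}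
    (hw : w ∈ kdown v t) : v.1 <:+ w.1 := by
  obtain ⟨g, hg⟩ := mem_kdown ht hw
  exact ⟨List.ofFn g, hg.symm⟩

lemma kdown_good {v : KVert k h} {t : ℕ} (ht : t + v.1.length ≤ h)
    (hpar : (t + v.1.length) % 2 = h % 2) {w : KVert k h}
    (hw : w ∈ kdown v t) : w ∈ Good k h := by
  obtain ⟨g, hg⟩ := mem_kdown ht hw
  rw [good_mem_iff, hg, List.length_append, List.length_ofFn]
  omega

lemma kdown_shape {v : KVert k h} {t : ℕ} (ht : t + v.1.length ≤ h)
    (f : KVert k h → ℕ) (htf : t ≤ f v) {w : KVert k h}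
    (hw : w ∈ kdown v t) : Shape f v w := by
  obtain ⟨g, hg⟩ := mem_kdown ht hw
  exact ⟨List.ofFn g, 0, by simp, by simp [htf], by simpa using hg⟩

section Shell

variable (hk : 3 ≤ k) {v : KVert k h} {jm : ℕ}

lemma mem_kshell (hjm : jm + 1 ≤ v.1.length) {w : KVert k h} (hw : w ∈ kshell hk v jm) :
    ∃ (g : Fin (h - v.1.length + jm) → Fin k) (i : Fin (k - 1)),
      w.1 = List.ofFn g ++ (avoid hk (v.1.getD jm ⟨0, by omega⟩) i) :: v.1.drop (jm + 1) := by
  rw [kshell, Finset.mem_image] at hw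
  obtain ⟨p, _, rfl⟩ := hw
  refine ⟨p.1, p.2, mkv_val ?_⟩
  rw [List.length_append, List.length_ofFn, List.length_cons, List.length_drop]
  have := v.2
  omega

lemma kshell_length (hjm : jm + 1 ≤ v.1.length) {w : KVert k h} (hw : w ∈ kshell hk v jm) : w.1.length = h := by
  obtain ⟨g, i, hg⟩ := mem_kshell hk hjm hw
  rw [hg, List.length_append, List.length_ofFn, List.length_cons, List.length_drop]
  have := v.2
  omega

lemma kshell_good (hjm : jm + 1 ≤ v.1.length) {w : KVert k h} (hw : w ∈ kshell hk v jm) : w ∈ Good k h := by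
  rw [good_mem_iff, kshell_length hk hjm hw]

lemma kshell_suffix (hjm : jm + 1 ≤ v.1.length) {w : KVert k h} (hw : w ∈ kshell hk v jm) :
    v.1.drop (jm + 1) <:+ w.1 := by
  obtain ⟨g, i, hg⟩ := mem_kshell hk hjm hw
  exact ⟨List.ofFn g ++ [avoid hk (v.1.getD jm ⟨0, by omega⟩) i],
    by rw [List.append_assoc]; exact hg.symm⟩

lemma kshell_not_suffix (hjm : jm + 1 ≤ v.1.length) {w : KVert k h} (hw : w ∈ kshell hk v jm) :
    ¬ (v.1.drop jm <:+ w.1) := by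
  intro hs
  obtain ⟨g, i, hg⟩ := mem_kshell hk hjm hw
  set b := avoid hk (v.1.getD jm ⟨0, by omega⟩) i with hb
  have h1 : (b :: v.1.drop (jm + 1)) <:+ w.1 := ⟨List.ofFn g, hg.symm⟩
  have hlen : (v.1.drop jm).length = (b :: v.1.drop (jm + 1)).length := by
    rw [List.length_cons, List.length_drop, List.length_drop]
    omega
  have heq : v.1.drop jm = b :: v.1.drop (jm + 1) := by
    rcases List.suffix_or_suffix_of_suffix hs h1 with hc | hc
    · exact List.IsSuffix.eq_of_length hc hlen
    · exact (List.IsSuffix.eq_of_length hc hlen.symm).symm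
  have hjml : jm < v.1.length := by omega
  rw [List.drop_eq_getElem_cons hjml] at heq
  have hbv : v.1[jm] = b := (List.cons.injEq _ _ _ _).mp heq |>.1
  apply avoid_ne hk (v.1.getD jm ⟨0, by omega⟩) i
  rw [← hb, ← hbv, List.getD_eq_getElem _ _ hjml]

lemma kshell_shape (hjm : jm + 1 ≤ v.1.length) (f : KVert k h → ℕ)
    (hfv : h - v.1.length + 2 * jm + 2 ≤ f v) {w : KVert k h}
    (hw : w ∈ kshell hk v jm) : Shape f v w := by
  obtain ⟨g, i, hg⟩ := mem_kshell hk hjm hw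
  have hxlen : (List.ofFn g ++ [avoid hk (v.1.getD jm ⟨0, by omega⟩) i]).length
      = h - v.1.length + jm + 1 := by simp
  refine ⟨List.ofFn g ++ [avoid hk (v.1.getD jm ⟨0, by omega⟩) i], jm + 1, ?_, ?_, ?_⟩
  · rw [hxlen]; omega
  · rw [hxlen]; omega
  · rw [List.append_assoc]
    exact hg

lemma card_kshell (hjm : jm + 1 ≤ v.1.length) : (kshell hk v jm).card = k ^ (h - v.1.length + jm) * (k - 1) := by
  rw [kshell, Finset.card_image_of_injective _ ?_, Finset.card_univ]
  · simp [Fintype.card_prod]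
  · intro p q he
    have hlp : (List.ofFn p.1 ++
        (avoid hk (v.1.getD jm ⟨0, by omega⟩) p.2) :: v.1.drop (jm + 1)).length ≤ h := by
      rw [List.length_append, List.length_ofFn, List.length_cons, List.length_drop]
      have := v.2
      omega
    have hlq : (List.ofFn q.1 ++
        (avoid hk (v.1.getD jm ⟨0, by omega⟩) q.2) :: v.1.drop (jm + 1)).length ≤ h := by
      rw [List.length_append, List.length_ofFn, List.length_cons, List.length_drop]
      have := v.2
      omega
    have hval := congrArg Subtype.val he
    rw [mkv_val hlp, mkv_val hlq] at hval
    have hsplit := List.append_inj hval (by rw [List.length_ofFn, List.length_ofFn])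
    have h1 : p.1 = q.1 := List.ofFn_injective hsplit.1
    have h2 : p.2 = q.2 := by
      have := (List.cons.injEq _ _ _ _).mp hsplit.2 |>.1
      exact avoid_inj hk _ this
    exact Prod.ext h1 h2

end Shell

end Kary
namespace Kary

variable {k h : ℕ}

lemma three_pow (n : ℕ) : 2 * n + 1 ≤ 3 ^ n := by
  induction n with
  | zero => simp
  | succ m ih =>
    have : 3 ^ (m + 1) = 3 * 3 ^ m := by rw [pow_succ]; ring
    omega

def tstar (s p : ℕ) : ℕ := if (min s p) % 2 = s % 2 then min s p else min s p - 1

lemma tstar_spec (s p : ℕ) (h1 : 1 ≤ p) (h2 : p ≤ s + 1) :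
    tstar s p ≤ min s p ∧ tstar s p % 2 = s % 2 ∧ p ≤ 2 * tstar s p + 1 := by
  rw [tstar]; split <;> omega

/-- The set of vertices claimed by a broadcasting vertex `v`. -/
noncomputable def claimSet (hk : 3 ≤ k) (f : KVert k h → ℕ) (v : KVert k h) :
    Finset (KVert k h) :=
  if f v ≤ (h - v.1.length) + 1 then
    kdown v (tstar (h - v.1.length) (f v))
  else
    kdown v (h - v.1.length) ∪
      (Finset.range (min ((f v - (h - v.1.length)) / 2) v.1.length)).biUnion
        (fun jm => kshell hk v jm)

lemma claimSet_subset_good (hk : 3 ≤ k) (f : KVert k h → ℕ) (v : KVert k h)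
    (hp : 0 < f v) : claimSet hk f v ⊆ Good k h := by
  have hL := v.2
  rw [claimSet]
  split
  · next hdeep =>
    obtain ⟨hs1, hs2, _⟩ := tstar_spec (h - v.1.length) (f v) hp hdeep
    intro w hw
    exact kdown_good (by omega) (by omega) hw
  · next hsh =>
    intro w hw
    rcases Finset.mem_union.mp hw with hw | hw
    · exact kdown_good (by omega) (by omega) hw
    · rcases Finset.mem_biUnion.mp hw with ⟨jm, hjm, hw⟩
      rw [Finset.mem_range] at hjm
      exact kshell_good hk (by omega) hw

lemma claimSet_shape (hk : 3 ≤ k) (f : KVert k h → ℕ) (v : KVert k h)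
    (hp : 0 < f v) {w : KVert k h} (hw : w ∈ claimSet hk f v) : Shape f v w := by
  have hL := v.2
  rw [claimSet] at hw
  split at hw
  · next hdeep =>
    obtain ⟨hs1, _, _⟩ := tstar_spec (h - v.1.length) (f v) hp hdeep
    exact kdown_shape (by omega) f (by omega) hw
  · next hsh =>
    rcases Finset.mem_union.mp hw with hw | hw
    · exact kdown_shape (by omega) f (by omega) hw
    · rcases Finset.mem_biUnion.mp hw with ⟨jm, hjm, hw⟩
      rw [Finset.mem_range] at hjm
      apply kshell_shape hk (by omega) f (by omega) hw

lemma telescope (hk0 : 1 ≤ k) (s : ℕ) :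
    ∀ J : ℕ, k ^ s + ∑ jm ∈ Finset.range J, k ^ (s + jm) * (k - 1) = k ^ (s + J)
  | 0 => by simp
  | J + 1 => by
    have h1 : 1 ≤ k ^ (s + J) := Nat.one_le_pow _ _ hk0
    have h2 : k ^ (s + J) * k = k ^ (s + J + 1) := (pow_succ k (s + J)).symm
    have h3 : k ^ (s + J) * (k - 1) = k ^ (s + J) * k - k ^ (s + J) := by
      rw [Nat.mul_sub, Nat.mul_one]
    calc k ^ s + ∑ jm ∈ Finset.range (J + 1), k ^ (s + jm) * (k - 1)
        = (k ^ s + ∑ jm ∈ Finset.range J, k ^ (s + jm) * (k - 1))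
            + k ^ (s + J) * (k - 1) := by rw [Finset.sum_range_succ, Nat.add_assoc]
      _ = k ^ (s + J) + k ^ (s + J) * (k - 1) := by rw [telescope hk0 s J]
      _ = k ^ (s + J) * (1 + (k - 1)) := by rw [Nat.mul_add, Nat.mul_one]
      _ = k ^ (s + J) * k := by congr 1; omega
      _ = k ^ (s + J + 1) := (pow_succ k (s + J)).symm
      _ = k ^ (s + (J + 1)) := by rw [Nat.add_assoc]

lemma card_claimSet_ge (hk : 3 ≤ k) (f : KVert k h → ℕ) (v : KVert k h)
    (hp : 0 < f v) (hecc : f v ≤ h + v.1.length) :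
    f v ≤ (claimSet hk f v).card := by
  have hL := v.2
  rw [claimSet]
  split
  · next hdeep =>
    obtain ⟨hs1, hs2, hs3⟩ := tstar_spec (h - v.1.length) (f v) hp hdeep
    rw [card_kdown v _ (by omega)]
    calc f v ≤ 2 * tstar (h - v.1.length) (f v) + 1 := hs3
      _ ≤ 3 ^ tstar (h - v.1.length) (f v) := three_pow _
      _ ≤ k ^ tstar (h - v.1.length) (f v) := Nat.pow_le_pow_left hk _
  · next hsh =>
    set S := h - v.1.length with hS
    set J := min ((f v - S) / 2) v.1.length with hJ
    have hcard : (kdown v S ∪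
        (Finset.range J).biUnion (fun jm => kshell hk v jm)).card = k ^ (S + J) := by
      rw [Finset.card_union_of_disjoint, Finset.card_biUnion, card_kdown v S (by omega)]
      · rw [Finset.sum_congr rfl (fun jm hjm => card_kshell hk
          (by rw [Finset.mem_range] at hjm; omega) )]
        exact telescope (by omega) S J
      · intro a ha b hb hab
        rw [Finset.mem_coe, Finset.mem_range] at ha hb
        rcases Nat.lt_or_ge a b with hab' | hab'
        · rw [Function.onFun, Finset.disjoint_left]
          intro w hwa hwb
          apply kshell_not_suffix hk (by omega) hwb
          have h1 : v.1.drop (a + 1) <:+ w.1 := kshell_suffix hk (by omega) hwa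
          have h2 : v.1.drop b <:+ v.1.drop (a + 1) := by
            have := List.drop_suffix (b - (a + 1)) (v.1.drop (a + 1))
            rwa [List.drop_drop, Nat.add_sub_cancel' hab'] at this
          exact h2.trans h1
        · have hab'' : b < a := by omega
          rw [Function.onFun, Finset.disjoint_right]
          intro w hwa hwb
          apply kshell_not_suffix hk (by omega) hwb
          have h1 : v.1.drop (b + 1) <:+ w.1 := kshell_suffix hk (by omega) hwa
          have h2 : v.1.drop a <:+ v.1.drop (b + 1) := by
            have := List.drop_suffix (a - (b + 1)) (v.1.drop (b + 1))
            rwa [List.drop_drop, Nat.add_sub_cancel' hab''] at this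
          exact h2.trans h1
      · rw [Finset.disjoint_left]
        intro w hwd hwb
        rcases Finset.mem_biUnion.mp hwb with ⟨jm, hjm, hw⟩
        rw [Finset.mem_range] at hjm
        apply kshell_not_suffix hk (by omega) hw
        exact (List.drop_suffix jm v.1).trans (kdown_suffix (by omega) hwd)
    rw [hcard]
    have hfb : f v ≤ S + 2 * J + 1 := by omega
    calc f v ≤ 2 * (S + J) + 1 := by omega
      _ ≤ 3 ^ (S + J) := three_pow _
      _ ≤ k ^ (S + J) := Nat.pow_le_pow_left hk _

end Kary
namespace Kary

variable {k h : ℕ}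

lemma weight_le (hk : 3 ≤ k) (f : KVert k h → ℕ)
    (hf : IsIndepBroadcast (karyTree k h) f) : ∑ v, f v ≤ (Good k h).card := by
  classical
  have hsum : ∑ v ∈ Finset.univ.filter (fun v : KVert k h => 0 < f v), f v = ∑ v, f v :=
    Finset.sum_filter_of_ne (by intro x _ hx; omega)
  rw [← hsum]
  have hdisj : ∀ u ∈ Finset.univ.filter (fun v : KVert k h => 0 < f v),
      ∀ v ∈ Finset.univ.filter (fun v : KVert k h => 0 < f v), u ≠ v →
      Disjoint (claimSet hk f u) (claimSet hk f v) := by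
    intro u hu v hv huv
    rw [Finset.mem_filter] at hu hv
    rw [Finset.disjoint_left]
    intro w hwu hwv
    exact shape_disjoint f hf huv hu.2 hv.2
      (claimSet_shape hk f v hv.2 hwv) (claimSet_shape hk f u hu.2 hwu)
  calc ∑ v ∈ Finset.univ.filter (fun v : KVert k h => 0 < f v), f v
      ≤ ∑ v ∈ Finset.univ.filter (fun v : KVert k h => 0 < f v), (claimSet hk f v).card := by
        apply Finset.sum_le_sum
        intro v hv
        rw [Finset.mem_filter] at hv
        have hecc : f v ≤ h + v.1.length := le_trans (hf.1 v) (ecc_le v)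
        exact card_claimSet_ge hk f v hv.2 hecc
    _ = ((Finset.univ.filter (fun v : KVert k h => 0 < f v)).biUnion
          (claimSet hk f)).card := (Finset.card_biUnion hdisj).symm
    _ ≤ (Good k h).card := by
        apply Finset.card_le_card
        intro w hw
        rcases Finset.mem_biUnion.mp hw with ⟨v, hv, hw⟩
        rw [Finset.mem_filter] at hv
        exact claimSet_subset_good hk f v hv.2 hw

lemma alphaB_eq (hk : 3 ≤ k) (hh : 1 ≤ h) :
    alphaB (karyTree k h) = (Good k h).card := by
  rw [alphaB]
  apply _root_.le_antisymm
  · apply csSup_le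
    · refine ⟨0, (fun _ => 0), ⟨fun v => Nat.zero_le _, fun v w h0 => absurd h0 (by simp)⟩,
        by simp⟩
    · rintro n ⟨f, hf, rfl⟩
      exact weight_le hk f hf
  · apply le_csSup
    · exact ⟨(Good k h).card, by rintro n ⟨f, hf, rfl⟩; exact weight_le hk f hf⟩
    · exact ⟨unitf k h, unitf_indep (by omega) hh, (unitf_sum (by omega)).symm⟩

end Kary

/-- for a perfect `k`-ary tree with `k ≥ 3` and `h ≥ 1`, the broadcast
independence number equals the independence number; explicitly it is
`(k^(2(m+1)) - 1)/(k^2 - 1)` when `h = 2m` and `k` times that when `h = 2m + 1`. -/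
theorem stmt7 (k h : ℕ) (hk : 3 ≤ k) (hh : 1 ≤ h) :
    alphaB (karyTree k h) = indepNum (karyTree k h) ∧
    (∀ m : ℕ, h = 2 * m →
      alphaB (karyTree k h) = (k ^ (2 * (m + 1)) - 1) / (k ^ 2 - 1)) ∧
    (∀ m : ℕ, h = 2 * m + 1 →
      alphaB (karyTree k h) = k * ((k ^ (2 * (m + 1)) - 1) / (k ^ 2 - 1))) := by
  have e1 := Kary.alphaB_eq (k := k) (h := h) hk hh
  have e2 := Kary.indepNum_eq (k := k) (h := h) (by omega)
  refine ⟨by rw [e1, e2], fun m hm => ?_, fun m hm => ?_⟩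
  · rw [e1, Kary.good_card_even (by omega) m hm]
  · rw [e1, Kary.good_card_odd (by omega) m hm]
end

section
/- For every spider S(d_1,…,d_k), the broadcast independence number satisfies α_b(S(d_1,…,d_k)) = max over 1 ≤ t ≤ k−1 of [ (d_t + d_{t+1} − 1) + Σ_{j=t+1}^{k} (d_t + d_j − 1) ]. -/
variable {V : Type*}

/-- Vertices of the spider `S(d 0, …, d (k-1))`: `none` is the branch vertex `u`, and
`some ⟨i, j⟩` is the vertex at distance `j + 1` from `u` on the `i`-th branch. -/
abbrev SpiderVert (k : ℕ) (d : Fin k → ℕ) : Type := Option (Σ i : Fin k, Fin (d i))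

/-- The spider `S(d 0, …, d (k-1))`: the tree obtained from the star `K_{1,k}` with
center `u` by subdividing edges so that the `i`-th leaf is at distance `d i` from `u`. -/
def spider (k : ℕ) (d : Fin k → ℕ) : SimpleGraph (SpiderVert k d) where
  Adj x y :=
    match x, y with
    | none, none => False
    | none, some ⟨_, j⟩ => (j : ℕ) = 0
    | some ⟨_, j⟩, none => (j : ℕ) = 0
    | some ⟨i, j⟩, some ⟨i', j'⟩ =>
        (i : ℕ) = (i' : ℕ) ∧ ((j : ℕ) + 1 = (j' : ℕ) ∨ (j' : ℕ) + 1 = (j : ℕ))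
  symm := by
    refine ⟨?_⟩
    rintro (_ | ⟨i, j⟩) (_ | ⟨i', j'⟩) hxy <;> simp_all <;> omega
  loopless := by
    refine ⟨?_⟩
    rintro (_ | ⟨i, j⟩) hxy <;> simp_all

/-- The `i`-th leaf of the spider, at distance `d i` from the branch vertex. -/
def spiderLeaf (k : ℕ) (d : Fin k → ℕ) (hd : ∀ i, 1 ≤ d i) (i : Fin k) : SpiderVert k d :=
  some ⟨i, ⟨d i - 1, by have := hd i; omega⟩⟩

/-- A leaf of the spider: the end vertex of a branch. -/
def IsSpiderLeaf (k : ℕ) (d : Fin k → ℕ) : SpiderVert k d → Prop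
  | none => False
  | some ⟨i, j⟩ => (j : ℕ) + 1 = d i

namespace SpiderAux


variable {k : ℕ} {d : Fin k → ℕ}

/-- depth of a vertex -/
def dep : SpiderVert k d → ℕ
  | none => 0
  | some ⟨_, j⟩ => (j : ℕ) + 1

/-- intended distance function -/
def D : SpiderVert k d → SpiderVert k d → ℕ
  | none, none => 0
  | none, some ⟨_, j⟩ => (j : ℕ) + 1
  | some ⟨_, j⟩, none => (j : ℕ) + 1
  | some ⟨i, j⟩, some ⟨i', j'⟩ =>
      if i = i' then ((j : ℕ) - (j' : ℕ)) + ((j' : ℕ) - (j : ℕ))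
      else (j : ℕ) + (j' : ℕ) + 2

lemma D_self (x : SpiderVert k d) : D x x = 0 := by
  rcases x with _ | ⟨i, j⟩ <;> simp [D]

lemma D_step {x z : SpiderVert k d} (y : SpiderVert k d) (h : (spider k d).Adj x z) :
    D x y ≤ D z y + 1 := by
  rcases x with _ | ⟨i, j⟩ <;> rcases z with _ | ⟨i', j'⟩
  · simp [spider] at h
  · simp only [spider] at h
    rcases y with _ | ⟨i'', j''⟩ <;> simp only [D]
    · omega
    · split_ifs <;> omega
  · simp only [spider] at h
    rcases y with _ | ⟨i'', j''⟩ <;> simp only [D]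
    · omega
    · split_ifs <;> omega
  · simp only [spider] at h
    obtain ⟨hi, hj⟩ := h
    have hi' : i = i' := Fin.ext hi
    subst hi'
    rcases y with _ | ⟨i'', j''⟩ <;> simp only [D]
    · omega
    · split_ifs <;> omega

lemma D_le_length {x y : SpiderVert k d} (p : (spider k d).Walk x y) :
    D x y ≤ p.length := by
  induction p with
  | nil => simp [D_self]
  | cons h p ih =>
      rename_i u v w
      calc D u w ≤ D v w + 1 := D_step w h
      _ ≤ p.length + 1 := by omega
      _ = (SimpleGraph.Walk.cons h p).length := by simp

/-- walk from a branch vertex to the center -/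
def wtc (i : Fin k) : (j : ℕ) → (hj : j < d i) → (spider k d).Walk (some ⟨i, ⟨j, hj⟩⟩) none
  | 0, hj => SimpleGraph.Walk.cons (by simp [spider]) SimpleGraph.Walk.nil
  | j+1, hj =>
      SimpleGraph.Walk.cons
        (show (spider k d).Adj (some ⟨i, ⟨j+1, hj⟩⟩) (some ⟨i, ⟨j, by omega⟩⟩) by
          simp [spider])
        (wtc i j (by omega))

lemma wtc_length (i : Fin k) (j : ℕ) (hj : j < d i) : (wtc i j hj).length = j + 1 := by
  induction j with
  | zero => simp [wtc]; rfl
  | succ n ih => simp [wtc, ih]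

/-- walk down a branch -/
def wdown (i : Fin k) (j : ℕ) : (m : ℕ) → (h : j + m < d i) →
    (spider k d).Walk (some ⟨i, ⟨j + m, h⟩⟩) (some ⟨i, ⟨j, by omega⟩⟩)
  | 0, h => SimpleGraph.Walk.nil
  | m+1, h =>
      SimpleGraph.Walk.cons
        (show (spider k d).Adj (some ⟨i, ⟨j+m+1, h⟩⟩) (some ⟨i, ⟨j+m, by omega⟩⟩) by
          simp [spider])
        (wdown i j m (by omega))

lemma wdown_length (i : Fin k) (j m : ℕ) (h : j + m < d i) : (wdown i j m h).length = m := by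
  induction m with
  | zero => rfl
  | succ n ih => simp [wdown, ih]

lemma reachable_none (x : SpiderVert k d) : (spider k d).Reachable x none := by
  rcases x with _ | ⟨i, j⟩
  · exact SimpleGraph.Reachable.refl none
  · exact ⟨wtc i j.1 j.2⟩

lemma spider_reachable (x y : SpiderVert k d) : (spider k d).Reachable x y :=
  (reachable_none x).trans (reachable_none y).symm

lemma dist_branch_le (i : Fin k) (b : Fin (d i)) (m : ℕ) (h : (b : ℕ) + m < d i) :
    (spider k d).dist (some ⟨i, ⟨(b : ℕ) + m, h⟩⟩) (some ⟨i, b⟩) ≤ m := by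
  have := SimpleGraph.dist_le (wdown i (b : ℕ) m h)
  rw [wdown_length] at this
  exact this

lemma dist_le_D (x y : SpiderVert k d) : (spider k d).dist x y ≤ D x y := by
  rcases x with _ | ⟨i, j⟩ <;> rcases y with _ | ⟨i', j'⟩
  · simp [D_self]
  · rw [SimpleGraph.dist_comm]
    calc (spider k d).dist _ none ≤ (wtc i' j'.1 j'.2).length := SimpleGraph.dist_le _
    _ = D none (some ⟨i', j'⟩) := by rw [wtc_length]; rfl
  · calc (spider k d).dist _ none ≤ (wtc i j.1 j.2).length := SimpleGraph.dist_le _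
    _ = D (some ⟨i, j⟩) none := by rw [wtc_length]; rfl
  · by_cases hi : i = i'
    · subst hi
      rcases le_total (j' : ℕ) (j : ℕ) with hle | hle
      · have hlt : (j' : ℕ) + ((j : ℕ) - (j' : ℕ)) < d i := by omega
        have hj : j = ⟨(j' : ℕ) + ((j : ℕ) - (j' : ℕ)), hlt⟩ := Fin.ext (by simp; omega)
        rw [hj]
        refine le_trans (dist_branch_le i j' ((j : ℕ) - (j' : ℕ)) hlt) ?_
        simp [D]
      · rw [SimpleGraph.dist_comm]
        have hlt : (j : ℕ) + ((j' : ℕ) - (j : ℕ)) < d i := by omega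
        have hj : j' = ⟨(j : ℕ) + ((j' : ℕ) - (j : ℕ)), hlt⟩ := Fin.ext (by simp; omega)
        rw [hj]
        refine le_trans (dist_branch_le i j ((j' : ℕ) - (j : ℕ)) hlt) ?_
        simp [D]
    · have h2 : (spider k d).dist (some ⟨i, j⟩) (some ⟨i', j'⟩) ≤
          ((wtc i j.1 j.2).append (wtc i' j'.1 j'.2).reverse).length := SimpleGraph.dist_le _
      simp only [SimpleGraph.Walk.length_append, SimpleGraph.Walk.length_reverse,
        wtc_length] at h2
      simp only [D, if_neg hi]
      omega

lemma spider_dist (x y : SpiderVert k d) : (spider k d).dist x y = D x y := by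
  refine le_antisymm (dist_le_D x y) ?_
  obtain ⟨p, hp⟩ := (spider_reachable x y).exists_walk_length_eq_dist
  rw [← hp]
  exact D_le_length p


-- minimum of a finset of Fin k is at most k - card
lemma min'_le_card {k : ℕ} (B : Finset (Fin k)) (hB : B.Nonempty) :
    (B.min' hB : ℕ) + B.card ≤ k := by
  have hsub : B ⊆ Finset.Ici (B.min' hB) := fun x hx => Finset.mem_Ici.mpr (B.min'_le x hx)
  have := Finset.card_le_card hsub
  rw [Fin.card_Ici] at this
  have := (B.min' hB).isLt
  omega

/-- KEY arithmetic lemma -/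
lemma key {k : ℕ} (d : Fin k → ℕ) (hmono : Monotone d) (hd : ∀ i, 1 ≤ d i)
    (P : Finset (Fin k)) (hP : 2 ≤ P.card) (c : Fin k → ℕ) (z : ℕ)
    (H : ∀ j ∈ P, ∀ j' ∈ P, j ≠ j' → z + c j ≤ d j')
    (t : Fin k) (htv : (t : ℕ) = k - P.card) (ht : (t : ℕ) + 1 < k) :
    z + ∑ j ∈ P, (d j + c j - 1) ≤
      (d t + d ⟨(t : ℕ) + 1, ht⟩ - 1) + ∑ j ∈ Finset.Ioi t, (d t + d j - 1) := by
  have hk : 0 < k := by omega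
  have hPk : P.card ≤ k := by
    simpa using Finset.card_le_card (Finset.subset_univ P)
  have hPne : P.Nonempty := Finset.card_pos.mp (by omega)
  set q₁ := P.min' hPne with hq₁
  have hq₁P : q₁ ∈ P := P.min'_mem hPne
  set A := P.erase q₁ with hA
  have hAcard : A.card = P.card - 1 := Finset.card_erase_of_mem hq₁P
  have hAne : A.Nonempty := Finset.card_pos.mp (by omega)
  have hq₁t : (q₁ : ℕ) ≤ (t : ℕ) := by
    have := min'_le_card P hPne
    omega
  set q₂ := A.min' hAne with hq₂
  have hq₂A : q₂ ∈ A := A.min'_mem hAne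
  have hq₂P : q₂ ∈ P := Finset.mem_of_mem_erase hq₂A
  have hq₂ne : q₂ ≠ q₁ := Finset.ne_of_mem_erase hq₂A
  have hq₂t : (q₂ : ℕ) ≤ (t : ℕ) + 1 := by
    have := min'_le_card A hAne
    omega
  -- the matching map
  have hφaux : ∀ a : Fin k, k - 1 - (A.filter (fun x => a < x)).card < k := by
    intro a; omega
  set φ : Fin k → Fin k := fun a => ⟨k - 1 - (A.filter (fun x => a < x)).card, hφaux a⟩
    with hφ
  -- counting facts
  have hcount_le : ∀ a ∈ A, (A.filter (fun x => a < x)).card ≤ k - 1 - (a : ℕ) := by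
    intro a _
    have hsub : A.filter (fun x => a < x) ⊆ Finset.Ioi a := by
      intro x hx
      exact Finset.mem_Ioi.mpr (Finset.mem_filter.mp hx).2
    have := Finset.card_le_card hsub
    rw [Fin.card_Ioi] at this
    omega
  have hcount_lt : ∀ a ∈ A, (A.filter (fun x => a < x)).card ≤ A.card - 1 := by
    intro a ha
    have hsub : A.filter (fun x => a < x) ⊆ A.erase a := by
      intro x hx
      obtain ⟨hxA, hax⟩ := Finset.mem_filter.mp hx
      exact Finset.mem_erase.mpr ⟨ne_of_gt hax, hxA⟩
    have := Finset.card_le_card hsub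
    have := Finset.card_erase_of_mem ha
    omega
  have hmem_card : ∀ a ∈ A, ∀ b ∈ A, a < b →
      (A.filter (fun x => b < x)).card < (A.filter (fun x => a < x)).card := by
    intro a ha b hb hab
    have hsub : insert b (A.filter (fun x => b < x)) ⊆ A.filter (fun x => a < x) := by
      intro x hx
      rcases Finset.mem_insert.mp hx with rfl | hx
      · exact Finset.mem_filter.mpr ⟨hb, hab⟩
      · obtain ⟨hxA, hbx⟩ := Finset.mem_filter.mp hx
        exact Finset.mem_filter.mpr ⟨hxA, hab.trans hbx⟩
    have hcard := Finset.card_le_card hsub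
    rw [Finset.card_insert_of_notMem (by simp)] at hcard
    omega
  have hφ_ge : ∀ a ∈ A, (a : ℕ) ≤ ((φ a : Fin k) : ℕ) := by
    intro a ha
    have h1 := hcount_le a ha
    have := a.isLt
    simp only [hφ]
    omega
  have hφ_Ioi : ∀ a ∈ A, φ a ∈ Finset.Ioi t := by
    intro a ha
    have h1 := hcount_lt a ha
    refine Finset.mem_Ioi.mpr ?_
    have : (t : ℕ) < ((φ a : Fin k) : ℕ) := by
      simp only [hφ]
      omega
    exact this
  have hφ_inj : ∀ a ∈ A, ∀ b ∈ A, φ a = φ b → a = b := by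
    intro a ha b hb hab
    by_contra hne
    have hval : k - 1 - (A.filter (fun x => a < x)).card
        = k - 1 - (A.filter (fun x => b < x)).card := by
      simpa [hφ, Fin.ext_iff] using hab
    rcases lt_or_gt_of_ne hne with h | h
    · have := hmem_card a ha b hb h
      have := hcount_le a ha
      have := hcount_le b hb
      have := a.isLt
      omega
    · have := hmem_card b hb a ha h
      have := hcount_le a ha
      have := hcount_le b hb
      have := b.isLt
      omega
  -- decompose the sum over P
  have hsplit : ∑ j ∈ P, (d j + c j - 1) = (d q₁ + c q₁ - 1) + ∑ j ∈ A, (d j + c j - 1) := by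
    rw [hA, ← Finset.add_sum_erase _ _ hq₁P]
  rw [hsplit]
  -- bound the A-part
  have hApart : ∑ j ∈ A, (d j + c j - 1) ≤ ∑ j ∈ Finset.Ioi t, (d t + d j - 1) := by
    have h1 : ∑ j ∈ A, (d j + c j - 1) ≤ ∑ j ∈ A, (d t + d (φ j) - 1) := by
      refine Finset.sum_le_sum ?_
      intro j hj
      have hcj : c j ≤ d t := by
        have hne : j ≠ q₁ := Finset.ne_of_mem_erase hj
        have := H j (Finset.mem_of_mem_erase hj) q₁ hq₁P hne
        have hmq : d q₁ ≤ d t := hmono (by exact Fin.le_def.mpr hq₁t)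
        omega
      have hdj : d j ≤ d (φ j) := hmono (Fin.le_def.mpr (hφ_ge j hj))
      have := hd j
      omega
    have h2 : ∑ b ∈ A.image φ, (d t + d b - 1) = ∑ j ∈ A, (d t + d (φ j) - 1) :=
      Finset.sum_image (fun x hx y hy h => hφ_inj x hx y hy h)
    have h3 : A.image φ ⊆ Finset.Ioi t := by
      intro b hb
      obtain ⟨a, ha, rfl⟩ := Finset.mem_image.mp hb
      exact hφ_Ioi a ha
    have h4 : ∑ b ∈ A.image φ, (d t + d b - 1) ≤ ∑ j ∈ Finset.Ioi t, (d t + d j - 1) :=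
      Finset.sum_le_sum_of_subset h3
    omega
  -- bound the q₁-part together with z
  have hq1part : z + (d q₁ + c q₁ - 1) ≤ d t + d ⟨(t : ℕ) + 1, ht⟩ - 1 := by
    have h1 : z + c q₁ ≤ d q₂ := H q₁ hq₁P q₂ hq₂P (Ne.symm hq₂ne)
    have h2 : d q₂ ≤ d ⟨(t : ℕ) + 1, ht⟩ := hmono (Fin.le_def.mpr (by simpa using hq₂t))
    have h3 : d q₁ ≤ d t := hmono (Fin.le_def.mpr hq₁t)
    have := hd q₁
    have := hd t
    omega
  omega


/-- the lower bound: each candidate value is achieved by an independent broadcast -/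
lemma lower (k : ℕ) (hk : 3 ≤ k) (d : Fin k → ℕ) (hd : ∀ i, 1 ≤ d i)
    (hmono : Monotone d) (t : Fin k) (ht : (t : ℕ) + 1 < k) :
    ∃ f : SpiderVert k d → ℕ, IsIndepBroadcast (spider k d) f ∧
      ∑ v, f v = (d t + d ⟨(t : ℕ) + 1, ht⟩ - 1) + ∑ j ∈ Finset.Ioi t, (d t + d j - 1) := by
  classical
  set t' : Fin k := ⟨(t : ℕ) + 1, ht⟩ with ht'
  set f : SpiderVert k d → ℕ := fun v =>
    match v with
    | none => 0
    | some ⟨i, j⟩ =>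
        if (j : ℕ) + 1 = d i ∧ t ≤ i then
          (if i = t then d t + d t' - 1 else d t + d i - 1) else 0
    with hfdef
  have hf_none : f none = 0 := rfl
  have hf_some : ∀ (i : Fin k) (j : Fin (d i)), f (some ⟨i, j⟩) =
      if (j : ℕ) + 1 = d i ∧ t ≤ i then
        (if i = t then d t + d t' - 1 else d t + d i - 1) else 0 := fun i j => rfl
  have htt' : t < t' := by
    rw [Fin.lt_def]; simp [ht']
  -- positivity analysis
  have hpos : ∀ v, 0 < f v → ∃ (i : Fin k) (j : Fin (d i)),
      v = some ⟨i, j⟩ ∧ (j : ℕ) + 1 = d i ∧ t ≤ i := by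
    intro v hv
    rcases v with _ | ⟨i, j⟩
    · simp [hf_none] at hv
    · refine ⟨i, j, rfl, ?_⟩
      rw [hf_some] at hv
      by_contra hcon
      rw [if_neg hcon] at hv
      omega
  refine ⟨f, ⟨?_, ?_⟩, ?_⟩
  · -- broadcast
    intro v
    rcases v with _ | ⟨i, j⟩
    · simp [hf_none]
    · rw [hf_some]
      split_ifs with h1 h2
      · -- i = t, use leaf at branch t'
        have hne : t' ≠ i := by rw [h2]; exact ne_of_gt htt'
        have hdc : d i = d t := by rw [h2]
        have hdist : (spider k d).dist (some ⟨t', ⟨d t' - 1, by have := hd t'; omega⟩⟩)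
            (some ⟨i, j⟩) = (d t' - 1) + (j : ℕ) + 2 := by
          rw [spider_dist]
          simp only [D, if_neg hne]
        have hsup : (spider k d).dist (some ⟨t', ⟨d t' - 1, by have := hd t'; omega⟩⟩)
            (some ⟨i, j⟩) ≤ ecc (spider k d) (some ⟨i, j⟩) :=
          Finset.le_sup (f := fun u => (spider k d).dist u (some ⟨i, j⟩))
            (Finset.mem_univ _)
        refine le_trans ?_ hsup
        rw [hdist]
        have := hd t'
        omega
      · -- t < i, use leaf at branch t
        have hne : t ≠ i := fun h => h2 h.symm
        have hdist : (spider k d).dist (some ⟨t, ⟨d t - 1, by have := hd t; omega⟩⟩)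
            (some ⟨i, j⟩) = (d t - 1) + (j : ℕ) + 2 := by
          rw [spider_dist]
          simp only [D, if_neg hne]
        have hsup : (spider k d).dist (some ⟨t, ⟨d t - 1, by have := hd t; omega⟩⟩)
            (some ⟨i, j⟩) ≤ ecc (spider k d) (some ⟨i, j⟩) :=
          Finset.le_sup (f := fun u => (spider k d).dist u (some ⟨i, j⟩))
            (Finset.mem_univ _)
        refine le_trans ?_ hsup
        rw [hdist]
        have := hd t
        omega
      · exact Nat.zero_le _
  · -- independence
    intro v w hv hvw
    rintro ⟨hw, hdist⟩
    obtain ⟨i, j, rfl, hji, hti⟩ := hpos v hv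
    obtain ⟨i', j', rfl, hji', hti'⟩ := hpos w hw
    by_cases hii : i = i'
    · subst hii
      have : j = j' := Fin.ext (by omega)
      exact hvw (by rw [this])
    · rw [spider_dist] at hdist
      simp only [D, if_neg hii] at hdist
      rw [hf_some] at hdist
      rw [if_pos ⟨hji', hti'⟩] at hdist
      have hdt : d t ≤ d i := hmono hti
      split_ifs at hdist with hit
      · -- i' = t, so t < i
        have hdii : d i' = d t := by rw [hit]
        have hlt : t < i := by
          refine lt_of_le_of_ne hti (fun h => hii ?_)
          rw [← h, hit]
        have hdt' : d t' ≤ d i := hmono (Fin.le_def.mpr (by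
          rw [Fin.lt_def] at hlt; simp only [ht', Fin.val_mk]; omega))
        omega
      · omega
  · -- the sum
    rw [Fintype.sum_option f, hf_none, zero_add, ← Finset.univ_sigma_univ,
      Finset.sum_sigma]
    have hinner : ∀ i : Fin k, (∑ j : Fin (d i), f (some ⟨i, j⟩))
        = if t ≤ i then (if i = t then d t + d t' - 1 else d t + d i - 1) else 0 := by
      intro i
      rw [Finset.sum_eq_single (⟨d i - 1, by have := hd i; omega⟩ : Fin (d i))]
      · rw [hf_some]
        have := hd i
        by_cases h : t ≤ i
        · rw [if_pos ⟨by simp; omega, h⟩, if_pos h]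
        · rw [if_neg (by rintro ⟨-, h2⟩; exact h h2), if_neg h]
      · intro j _ hj
        rw [hf_some, if_neg]
        rintro ⟨h1, -⟩
        exact hj (Fin.ext (by simp; omega))
      · intro h
        exact absurd (Finset.mem_univ _) h
    rw [Finset.sum_congr rfl (fun i _ => hinner i)]
    have hsplit : ∀ i : Fin k,
        (if t ≤ i then (if i = t then d t + d t' - 1 else d t + d i - 1) else 0)
        = (if i = t then d t + d t' - 1 else 0) + (if t < i then d t + d i - 1 else 0) := by
      intro i
      by_cases hit : i = t
      · subst hit
        simp
      · by_cases hlt : t < i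
        · rw [if_pos hlt.le, if_neg hit, if_neg hit, if_pos hlt]
          omega
        · have hnle : ¬ t ≤ i := fun hle =>
            hlt (lt_of_le_of_ne hle (fun he => hit he.symm))
          rw [if_neg hnle, if_neg hit, if_neg hlt]
    rw [Finset.sum_congr rfl (fun i _ => hsplit i), Finset.sum_add_distrib,
      Finset.sum_ite_eq' Finset.univ t (fun _ => d t + d t' - 1)]
    have hIoi : Finset.univ.filter (fun i => t < i) = Finset.Ioi t := by
      ext x
      simp [Finset.mem_Ioi]
    rw [if_pos (Finset.mem_univ t), ← Finset.sum_filter, hIoi]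


lemma upper (k : ℕ) (hk : 3 ≤ k) (d : Fin k → ℕ) (hd : ∀ i, 1 ≤ d i)
    (hmono : Monotone d) (f : SpiderVert k d → ℕ)
    (hf : IsIndepBroadcast (spider k d) f) :
    ∃ (t : Fin k) (ht : (t : ℕ) + 1 < k),
      ∑ v, f v ≤ (d t + d ⟨(t : ℕ) + 1, ht⟩ - 1) + ∑ j ∈ Finset.Ioi t, (d t + d j - 1) := by
  classical
  have hpair : ∀ v w : SpiderVert k d, 0 < f v → 0 < f w → v ≠ w → f w < D v w := by
    intro v w hv hw hne
    have h2 := hf.2 v w hv hne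
    unfold Hears at h2
    rw [spider_dist] at h2
    omega
  set B : Finset (SpiderVert k d) := Finset.univ.filter (fun v => 0 < f v) with hB
  set P : Finset (Fin k) :=
    Finset.univ.filter (fun i => ∃ j : Fin (d i), 0 < f (some ⟨i, j⟩)) with hP
  have hmemB : ∀ v, v ∈ B ↔ 0 < f v := by
    intro v; simp [hB]
  have hmemP : ∀ i, i ∈ P ↔ ∃ j : Fin (d i), 0 < f (some ⟨i, j⟩) := by
    intro i; simp [hP]
  have hsumB : ∑ v ∈ B, f v = ∑ v, f v := by
    refine Finset.sum_subset (Finset.subset_univ B) ?_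
    intro x _ hx
    rw [hmemB] at hx
    omega
  -- depth of any vertex on branch i is at most d i
  have hdep_le : ∀ (i : Fin k) (j : Fin (d i)), dep (some ⟨i, j⟩ : SpiderVert k d) ≤ d i := by
    intro i j
    have := j.isLt
    simp only [dep]
    omega
  -- index facts
  have hk2 : k - 2 < k := by omega
  have hk1 : k - 1 < k := by omega
  set t₀ : Fin k := ⟨k - 2, hk2⟩ with ht₀
  have ht₀1 : (t₀ : ℕ) + 1 < k := by simp [ht₀]; omega
  have hIoi : Finset.Ioi t₀ = {(⟨k - 1, hk1⟩ : Fin k)} := by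
    ext x
    simp only [Finset.mem_Ioi, Finset.mem_singleton, Fin.lt_def, Fin.ext_iff, ht₀]
    have := x.isLt
    omega
  have hidx : (⟨(t₀ : ℕ) + 1, ht₀1⟩ : Fin k) = ⟨k - 1, hk1⟩ := Fin.ext (by simp [ht₀]; omega)
  have htarget : (d t₀ + d ⟨(t₀ : ℕ) + 1, ht₀1⟩ - 1) + ∑ j ∈ Finset.Ioi t₀, (d t₀ + d j - 1)
      = 2 * (d t₀ + d ⟨k - 1, hk1⟩ - 1) := by
    rw [hIoi, Finset.sum_singleton, hidx]
    ring
  have hdle : ∀ i : Fin k, d i ≤ d ⟨k - 1, hk1⟩ := by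
    intro i
    exact hmono (Fin.le_def.mpr (by simp; omega))
  rcases Nat.lt_or_ge B.card 2 with hBc | hBc
  · -- at most one broadcasting vertex
    refine ⟨t₀, ht₀1, ?_⟩
    rw [htarget]
    have hbound : ∑ v, f v ≤ d t₀ + d ⟨k - 1, hk1⟩ := by
      by_cases hex : ∃ v, 0 < f v
      · obtain ⟨v₀, hv₀⟩ := hex
        have honly : ∀ w, w ≠ v₀ → f w = 0 := by
          intro w hw
          by_contra hcon
          have hwB : w ∈ B := (hmemB w).mpr (by omega)
          have hvB : v₀ ∈ B := (hmemB v₀).mpr hv₀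
          have : 1 < B.card := Finset.one_lt_card.mpr ⟨w, hwB, v₀, hvB, hw⟩
          omega
        have hsum : ∑ v, f v = f v₀ :=
          Finset.sum_eq_single v₀ (fun w _ hw => honly w hw)
            (fun h => absurd (Finset.mem_univ v₀) h)
        rw [hsum]
        have hecc := hf.1 v₀
        refine hecc.trans ?_
        have hDb : ∀ u : SpiderVert k d, D u v₀ ≤ d t₀ + d ⟨k - 1, hk1⟩ := by
          have hpairsum : ∀ i i' : Fin k, i ≠ i' → d i + d i' ≤ d t₀ + d ⟨k - 1, hk1⟩ := by
            intro i i' hne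
            have hvne : (i : ℕ) ≠ (i' : ℕ) := fun h => hne (Fin.ext h)
            have hi := i.isLt
            have hi' := i'.isLt
            rcases Nat.lt_or_ge (i : ℕ) (i' : ℕ) with h | h
            · have h1 : d i ≤ d t₀ := hmono (Fin.le_def.mpr (by simp [ht₀]; omega))
              have h2 : d i' ≤ d ⟨k - 1, hk1⟩ := hdle i'
              omega
            · have h1 : d i' ≤ d t₀ := hmono (Fin.le_def.mpr (by simp [ht₀]; omega))
              have h2 : d i ≤ d ⟨k - 1, hk1⟩ := hdle i
              omega
          intro u
          have hd0 := hd t₀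
          rcases u with _ | ⟨i, j⟩ <;> rcases v₀ with _ | ⟨i', j'⟩
          · simp [D]
          · have h2 : d i' ≤ d ⟨k - 1, hk1⟩ := hdle i'
            have := j'.isLt
            simp only [D]
            omega
          · have h2 : d i ≤ d ⟨k - 1, hk1⟩ := hdle i
            have := j.isLt
            simp only [D]
            omega
          · simp only [D]
            split_ifs with hii
            · have h2 : d i ≤ d ⟨k - 1, hk1⟩ := hdle i
              have h2' : d i' ≤ d ⟨k - 1, hk1⟩ := hdle i'
              have hj1 := j.isLt
              have hj2 := j'.isLt
              omega
            · have := hpairsum i i' hii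
              have := j.isLt
              have := j'.isLt
              omega
        have : ecc (spider k d) v₀ ≤ d t₀ + d ⟨k - 1, hk1⟩ := by
          refine Finset.sup_le ?_
          intro u _
          rw [spider_dist]
          exact hDb u
        exact this
      · push_neg at hex
        have : ∑ v, f v = 0 := Finset.sum_eq_zero (fun v _ => by have := hex v; omega)
        omega
    have h1 := hd t₀
    have h2 := hd ⟨k - 1, hk1⟩
    omega
  · -- at least two broadcasting vertices
    rcases Nat.lt_or_ge P.card 2 with hPc | hPc
    · -- all broadcasting vertices on the center or a single branch
      refine ⟨t₀, ht₀1, ?_⟩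
      rw [htarget]
      -- find the single occupied branch
      obtain ⟨v₁, hv₁B, v₂, hv₂B, hv12⟩ := Finset.one_lt_card.mp hBc
      have hPne : ∃ i₀, i₀ ∈ P := by
        rcases v₁ with _ | ⟨i, j⟩
        · rcases v₂ with _ | ⟨i, j⟩
          · exact absurd rfl hv12
          · exact ⟨i, (hmemP i).mpr ⟨j, (hmemB _).mp hv₂B⟩⟩
        · exact ⟨i, (hmemP i).mpr ⟨j, (hmemB _).mp hv₁B⟩⟩
      obtain ⟨i₀, hi₀⟩ := hPne
      have hPsing : ∀ i ∈ P, i = i₀ := by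
        intro i hi
        by_contra hne
        have : 1 < P.card := Finset.one_lt_card.mpr ⟨i, hi, i₀, hi₀, hne⟩
        omega
      have hline : ∀ v ∈ B, v = none ∨ ∃ j : Fin (d i₀), v = some ⟨i₀, j⟩ := by
        intro v hv
        rcases v with _ | ⟨i, j⟩
        · exact Or.inl rfl
        · right
          have hiP : i ∈ P := (hmemP i).mpr ⟨j, (hmemB _).mp hv⟩
          have : i = i₀ := hPsing i hiP
          subst this
          exact ⟨j, rfl⟩
      have hdepB : ∀ v ∈ B, dep v ≤ d i₀ := by
        intro v hv
        rcases hline v hv with rfl | ⟨j, rfl⟩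
        · simp [dep]
        · exact hdep_le i₀ j
      have hdepne : ∀ v ∈ B, ∀ w ∈ B, v ≠ w → dep v ≠ dep w := by
        intro v hv w hw hne
        rcases hline v hv with rfl | ⟨j, rfl⟩ <;> rcases hline w hw with rfl | ⟨j', rfl⟩
        · exact absurd rfl hne
        · simp [dep]
        · simp [dep]
        · simp only [dep]
          intro heq
          exact hne (by rw [Fin.ext (show (j : ℕ) = (j' : ℕ) by omega)])
      have hDline : ∀ v ∈ B, ∀ w ∈ B, D v w = (dep v - dep w) + (dep w - dep v) := by
        intro v hv w hw
        rcases hline v hv with rfl | ⟨j, rfl⟩ <;> rcases hline w hw with rfl | ⟨j', rfl⟩ <;>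
          simp [D, dep]
      -- interval argument
      set K : SpiderVert k d → Finset ℤ :=
        fun v => Finset.Ioc ((dep v : ℤ) - f v) (dep v) with hK
      have hKcard : ∀ v, (K v).card = f v := by
        intro v
        rw [hK]
        rw [Int.card_Ioc]
        omega
      have hdisj : ∀ v ∈ B, ∀ w ∈ B, v ≠ w → Disjoint (K v) (K w) := by
        intro v hv w hw hne
        have h1 : f w < D v w := hpair v w ((hmemB v).mp hv) ((hmemB w).mp hw) hne
        have h2 : f v < D w v := hpair w v ((hmemB w).mp hw) ((hmemB v).mp hv) hne.symm
        rw [hDline v hv w hw] at h1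
        rw [hDline w hw v hv] at h2
        rw [Finset.disjoint_left]
        intro x hx hx'
        simp only [hK, Finset.mem_Ioc] at hx hx'
        omega
      have hsub : ∀ v ∈ B, K v ⊆ Finset.Ioc (-(d i₀ : ℤ)) (d i₀) := by
        intro v hv
        obtain ⟨w, hwB, hwv⟩ := Finset.exists_mem_ne hBc v
        have h1 : f v < D w v := hpair w v ((hmemB w).mp hwB) ((hmemB v).mp hv) hwv
        rw [hDline w hwB v hv] at h1
        have h2 := hdepB v hv
        have h3 := hdepB w hwB
        intro x hx
        simp only [hK, Finset.mem_Ioc] at hx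
        simp only [Finset.mem_Ioc]
        omega
      have hchain : ∑ v ∈ B, f v ≤ 2 * d i₀ := by
        calc ∑ v ∈ B, f v = ∑ v ∈ B, (K v).card := by
              refine Finset.sum_congr rfl (fun v _ => (hKcard v).symm)
        _ = (B.biUnion K).card := (Finset.card_biUnion hdisj).symm
        _ ≤ (Finset.Ioc (-(d i₀ : ℤ)) (d i₀)).card :=
              Finset.card_le_card (Finset.biUnion_subset.mpr hsub)
        _ = 2 * d i₀ := by rw [Int.card_Ioc]; omega
      rw [← hsumB]
      have h1 := hd t₀
      have h2 := hdle i₀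
      have h3 := hd ⟨k - 1, hk1⟩
      omega
    · -- main case: at least two occupied branches
      have hPk : P.card ≤ k := by
        have := Finset.card_le_card (Finset.subset_univ P)
        simpa using this
      have htv : k - P.card < k := by omega
      set t : Fin k := ⟨k - P.card, htv⟩ with htdef
      have ht : (t : ℕ) + 1 < k := by simp [htdef]; omega
      refine ⟨t, ht, ?_⟩
      set Boff : Fin k → Finset (SpiderVert k d) :=
        fun i => B.filter (fun w => ∀ j : Fin (d i), w ≠ some ⟨i, j⟩) with hBoff
      have hBoffne : ∀ i ∈ P, (Boff i).Nonempty := by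
        intro i hi
        obtain ⟨i', hi'P, hne⟩ := Finset.exists_mem_ne hPc i
        obtain ⟨j', hj'⟩ := (hmemP i').mp hi'P
        refine ⟨some ⟨i', j'⟩, Finset.mem_filter.mpr ⟨(hmemB _).mpr hj', ?_⟩⟩
        intro j heq
        have : i' = i := by
          have := Option.some.inj heq
          exact (Sigma.mk.inj_iff.mp this).1
        exact hne this
      set c : Fin k → ℕ := fun i =>
        if h : (Boff i).Nonempty then (Boff i).inf' h dep else 0 with hc
      set z : ℕ := f none with hz
      -- off-branch vertices are broadcasters not equal to branch-i vertices
      have hoffD : ∀ (i : Fin k) (w : SpiderVert k d), w ∈ Boff i →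
          ∀ j : Fin (d i), D w (some ⟨i, j⟩) = dep w + ((j : ℕ) + 1) ∧ w ≠ some ⟨i, j⟩ := by
        intro i w hw j
        have h404 := (Finset.mem_filter.mp hw).2
        constructor
        · rcases w with _ | ⟨i'', j''⟩
          · simp [D, dep]
          · have hii : i'' ≠ i := by
              intro he
              subst he
              exact (h404 j'') rfl
            simp only [D, dep, if_neg hii]
            omega
        · exact h404 j
      have hcwit : ∀ i ∈ P, ∃ w ∈ Boff i, c i = dep w := by
        intro i hi
        obtain ⟨w, hw, hwe⟩ := Finset.exists_mem_eq_inf' (hBoffne i hi) dep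
        exact ⟨w, hw, by simp only [hc]; rw [dif_pos (hBoffne i hi)]; exact hwe⟩
      have hcle : ∀ i ∈ P, ∀ w ∈ Boff i, c i ≤ dep w := by
        intro i hi w hw
        simp only [hc]
        rw [dif_pos (hBoffne i hi)]
        exact Finset.inf'_le dep hw
      -- hypothesis H of the key lemma
      have hH : ∀ i ∈ P, ∀ i' ∈ P, i ≠ i' → z + c i ≤ d i' := by
        intro i hi i' hi' hne
        obtain ⟨j', hj'⟩ := (hmemP i').mp hi'
        have hw'B : (some ⟨i', j'⟩ : SpiderVert k d) ∈ B := (hmemB _).mpr hj'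
        have hw'off : (some ⟨i', j'⟩ : SpiderVert k d) ∈ Boff i := by
          refine Finset.mem_filter.mpr ⟨hw'B, ?_⟩
          intro j heq
          have : i' = i := (Sigma.mk.inj_iff.mp (Option.some.inj heq)).1
          exact hne this.symm
        have hdepw' : dep (some ⟨i', j'⟩ : SpiderVert k d) ≤ d i' := hdep_le i' j'
        by_cases hz0 : 0 < f none
        · have hnoneoff : (none : SpiderVert k d) ∈ Boff i :=
            Finset.mem_filter.mpr ⟨(hmemB _).mpr hz0, fun j heq => by cases heq⟩
          have hci : c i ≤ 0 := by
            have := hcle i hi none hnoneoff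
            simpa [dep] using this
          have hfn : f none < D (some ⟨i', j'⟩) none :=
            hpair _ _ hj' hz0 (fun h => by cases h)
          simp only [D] at hfn
          have := j'.isLt
          simp only [hz]
          omega
        · have hci := hcle i hi _ hw'off
          simp only [dep] at hci
          have := j'.isLt
          simp only [hz]
          omega
      -- per-branch bound
      have hFi : ∀ i ∈ P, ∑ j : Fin (d i), f (some ⟨i, j⟩) ≤ d i + c i - 1 := by
        intro i hi
        set Bi : Finset (Fin (d i)) :=
          Finset.univ.filter (fun j => 0 < f (some ⟨i, j⟩)) with hBi
        have hsumBi : ∑ j ∈ Bi, f (some ⟨i, j⟩) = ∑ j : Fin (d i), f (some ⟨i, j⟩) := by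
          refine Finset.sum_subset (Finset.subset_univ Bi) ?_
          intro x _ hx
          simp only [hBi, Finset.mem_filter, Finset.mem_univ, true_and] at hx
          omega
        set Ki : Fin (d i) → Finset ℤ :=
          fun j => Finset.Ioc (((j : ℕ) : ℤ) + 1 - f (some ⟨i, j⟩)) (((j : ℕ) : ℤ) + 1)
          with hKi
        have hKicard : ∀ j, (Ki j).card = f (some ⟨i, j⟩) := by
          intro j
          rw [hKi]
          rw [Int.card_Ioc]
          omega
        have hne_of_ne : ∀ j j' : Fin (d i), j ≠ j' →
            (some ⟨i, j⟩ : SpiderVert k d) ≠ some ⟨i, j'⟩ := by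
          intro j j' hne heq
          exact hne (eq_of_heq (Sigma.mk.inj_iff.mp (Option.some.inj heq)).2)
        have hdisj : ∀ j ∈ Bi, ∀ j' ∈ Bi, j ≠ j' → Disjoint (Ki j) (Ki j') := by
          intro j hj j' hj' hne
          have hjp : 0 < f (some ⟨i, j⟩) := by
            simp only [hBi, Finset.mem_filter] at hj; exact hj.2
          have hjp' : 0 < f (some ⟨i, j'⟩) := by
            simp only [hBi, Finset.mem_filter] at hj'; exact hj'.2
          have h1 : f (some ⟨i, j'⟩) < D (some ⟨i, j⟩) (some ⟨i, j'⟩) :=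
            hpair _ _ hjp hjp' (hne_of_ne j j' hne)
          have h2 : f (some ⟨i, j⟩) < D (some ⟨i, j'⟩) (some ⟨i, j⟩) :=
            hpair _ _ hjp' hjp (hne_of_ne j' j hne.symm)
          simp only [D, if_pos rfl, if_true, eq_self_iff_true] at h1 h2
          rw [Finset.disjoint_left]
          intro x hx hx'
          simp only [hKi, Finset.mem_Ioc] at hx hx'
          omega
        have hsub : ∀ j ∈ Bi, Ki j ⊆ Finset.Ioc (1 - (c i : ℤ)) (d i) := by
          intro j hj
          have hjp : 0 < f (some ⟨i, j⟩) := by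
            simp only [hBi, Finset.mem_filter] at hj; exact hj.2
          obtain ⟨w₀, hw₀, hw₀e⟩ := hcwit i hi
          obtain ⟨hD₀, hne₀⟩ := hoffD i w₀ hw₀ j
          have hw₀B : 0 < f w₀ := (hmemB w₀).mp (Finset.mem_filter.mp hw₀).1
          have h1 : f (some ⟨i, j⟩) < D w₀ (some ⟨i, j⟩) := hpair _ _ hw₀B hjp hne₀
          rw [hD₀] at h1
          have hjlt := j.isLt
          intro x hx
          simp only [hKi, Finset.mem_Ioc] at hx
          simp only [Finset.mem_Ioc]
          omega
        calc ∑ j : Fin (d i), f (some ⟨i, j⟩) = ∑ j ∈ Bi, f (some ⟨i, j⟩) := hsumBi.symm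
        _ = ∑ j ∈ Bi, (Ki j).card := Finset.sum_congr rfl (fun j _ => (hKicard j).symm)
        _ = (Bi.biUnion Ki).card := (Finset.card_biUnion hdisj).symm
        _ ≤ (Finset.Ioc (1 - (c i : ℤ)) (d i)).card :=
              Finset.card_le_card (Finset.biUnion_subset.mpr hsub)
        _ ≤ d i + c i - 1 := by
              rw [Int.card_Ioc]
              have := hd i
              omega
      have hFi0 : ∀ i ∉ P, ∑ j : Fin (d i), f (some ⟨i, j⟩) = 0 := by
        intro i hi
        refine Finset.sum_eq_zero (fun j _ => ?_)
        by_contra hcon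
        exact hi ((hmemP i).mpr ⟨j, by omega⟩)
      have htot : ∑ v, f v = z + ∑ i ∈ P, ∑ j : Fin (d i), f (some ⟨i, j⟩) := by
        rw [Fintype.sum_option f, ← Finset.univ_sigma_univ, Finset.sum_sigma]
        congr 1
        exact (Finset.sum_subset (Finset.subset_univ P) (fun x _ hx => hFi0 x hx)).symm
      rw [htot]
      have hstep : z + ∑ i ∈ P, ∑ j : Fin (d i), f (some ⟨i, j⟩)
          ≤ z + ∑ i ∈ P, (d i + c i - 1) := by
        have := Finset.sum_le_sum hFi
        omega
      refine hstep.trans ?_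
      exact key d hmono hd P hPc c z hH t rfl ht


end SpiderAux

/-- the broadcast independence number of a spider `S(d_1, …, d_k)` is the
maximum over `t` (0-based index with `t + 1 < k`, i.e. the 1-based range `1 ≤ t ≤ k - 1`) of
`(d_t + d_{t+1} - 1) + Σ_{j > t} (d_t + d_j - 1)`. -/
theorem stmt11 (k : ℕ) (hk : 3 ≤ k) (d : Fin k → ℕ) (hd : ∀ i, 1 ≤ d i)
    (hmono : Monotone d) :
    alphaB (spider k d) =
      sSup {w : ℕ | ∃ (t : Fin k) (ht : (t : ℕ) + 1 < k),
        w = (d t + d ⟨(t : ℕ) + 1, ht⟩ - 1) + ∑ j ∈ Finset.Ioi t, (d t + d j - 1)} := by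
  classical
  have hk2 : k - 2 < k := by omega
  have ht01 : ((⟨k - 2, hk2⟩ : Fin k) : ℕ) + 1 < k := by simp; omega
  have hSne : {w : ℕ | ∃ (t : Fin k) (ht : (t : ℕ) + 1 < k),
      w = (d t + d ⟨(t : ℕ) + 1, ht⟩ - 1) + ∑ j ∈ Finset.Ioi t, (d t + d j - 1)}.Nonempty :=
    ⟨_, ⟨⟨k - 2, hk2⟩, ht01, rfl⟩⟩
  have hdbound : ∀ i : Fin k, d i ≤ ∑ i', d i' := by
    intro i
    exact Finset.single_le_sum (fun i' _ => Nat.zero_le (d i')) (Finset.mem_univ i)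
  have hSbdd : BddAbove {w : ℕ | ∃ (t : Fin k) (ht : (t : ℕ) + 1 < k),
      w = (d t + d ⟨(t : ℕ) + 1, ht⟩ - 1) + ∑ j ∈ Finset.Ioi t, (d t + d j - 1)} := by
    refine ⟨2 * (∑ i', d i') + k * (2 * (∑ i', d i')), ?_⟩
    rintro w ⟨t, ht, rfl⟩
    have h1 : d t + d ⟨(t : ℕ) + 1, ht⟩ - 1 ≤ 2 * (∑ i', d i') := by
      have := hdbound t
      have := hdbound ⟨(t : ℕ) + 1, ht⟩
      omega
    have h2 : ∑ j ∈ Finset.Ioi t, (d t + d j - 1) ≤ k * (2 * (∑ i', d i')) := by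
      calc ∑ j ∈ Finset.Ioi t, (d t + d j - 1)
          ≤ ∑ _j ∈ Finset.Ioi t, 2 * (∑ i', d i') := by
            refine Finset.sum_le_sum ?_
            intro j _
            have := hdbound t
            have := hdbound j
            omega
      _ = (Finset.Ioi t).card * (2 * (∑ i', d i')) := by
            rw [Finset.sum_const, smul_eq_mul]
      _ ≤ k * (2 * (∑ i', d i')) := by
            have hcard : (Finset.Ioi t).card ≤ k := by
              have := Finset.card_le_card (Finset.subset_univ (Finset.Ioi t))
              simpa using this
            exact Nat.mul_le_mul_right _ hcard
    exact Nat.add_le_add h1 h2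
  have hLne : {w : ℕ | ∃ f, IsIndepBroadcast (spider k d) f ∧ w = ∑ v, f v}.Nonempty := by
    refine ⟨0, fun _ => 0, ⟨fun v => Nat.zero_le _, ?_⟩, by simp⟩
    intro v w hv
    simp at hv
  have hLbdd : BddAbove {w : ℕ | ∃ f, IsIndepBroadcast (spider k d) f ∧ w = ∑ v, f v} := by
    refine ⟨∑ v, ecc (spider k d) v, ?_⟩
    rintro w ⟨f, hf, rfl⟩
    exact Finset.sum_le_sum (fun v _ => hf.1 v)
  rw [alphaB]
  apply le_antisymm
  · refine csSup_le hLne ?_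
    rintro w ⟨f, hf, rfl⟩
    obtain ⟨t, ht, hle⟩ := SpiderAux.upper k hk d hd hmono f hf
    exact hle.trans (le_csSup hSbdd ⟨t, ht, rfl⟩)
  · refine csSup_le hSne ?_
    rintro w ⟨t, ht, rfl⟩
    obtain ⟨f, hf, hsum⟩ := SpiderAux.lower k hk d hd hmono t ht
    exact le_csSup hLbdd ⟨f, hf, hsum.symm⟩
end
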